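/- arXiv:2306.07833 — 9 statements merged into one kernel-verified Lean document; each statement's English description precedes it below -/
import Mathlib

section
/- Let K be an algebraically closed field of characteristic p > 0. Let A(Y) = a_n Y^{p^n} + a_{n-1} Y^{p^{n-1}} + \cdots + a_1 Y^{p} + a_0 Y be an additive (p-)polynomial over K with n \geq 1, a_0 \neq 0 and a_n \neq 0, and let B(X) \in K[X] be a polynomial of degree m \geq 2 with p \nmid m. Then the bivariate polynomial A(Y) - B(X) is irreducible in K[X, Y]. -/
open MvPolynomial

section AuxKummer

variable {K : Type*} [Field K]

private lemma ratfunc_intDegree_pow (b : RatFunc K) (hb : b ≠ 0) (q : ℕ) :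
    (b ^ q).intDegree = q * b.intDegree := by
  induction q with
  | zero => simp [RatFunc.intDegree_one]
  | succ q ih =>
    rw [pow_succ, RatFunc.intDegree_mul (pow_ne_zero _ hb) hb, ih]
    push_cast
    ring

private lemma irred_X_pow_sub_C_poly (c : K) (hc : c ≠ 0) {s t : ℕ}
    (hs : Odd s) (hcop : ∀ q : ℕ, q.Prime → q ∣ s → ¬ q ∣ t) :
    Irreducible (Polynomial.X ^ s - Polynomial.C (Polynomial.C c * Polynomial.X ^ t) :
      Polynomial (Polynomial K)) := by
  have hs0 : s ≠ 0 := by rintro rfl; simpa using hs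
  set u : Polynomial K := Polynomial.C c * Polynomial.X ^ t with hu
  have hmonic : (Polynomial.X ^ s - Polynomial.C u).Monic :=
    Polynomial.monic_X_pow_sub_C u hs0
  rw [hmonic.irreducible_iff_irreducible_map_fraction_map (K := RatFunc K)]
  rw [Polynomial.map_sub, Polynomial.map_pow, Polynomial.map_X, Polynomial.map_C]
  apply X_pow_sub_C_irreducible_of_odd hs
  intro q hq hqs b hb
  have hu0 : u ≠ 0 := by
    simp only [hu]
    exact mul_ne_zero (by simpa using hc) (pow_ne_zero _ Polynomial.X_ne_zero)
  have hA : algebraMap (Polynomial K) (RatFunc K) u ≠ 0 := by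
    simpa using RatFunc.algebraMap_ne_zero hu0
  have hb0 : b ≠ 0 := by rintro rfl; rw [zero_pow hq.ne_zero] at hb; exact hA hb.symm
  have hdeg := congrArg RatFunc.intDegree hb
  rw [ratfunc_intDegree_pow b hb0 q, RatFunc.intDegree_polynomial] at hdeg
  rw [hu, Polynomial.natDegree_C_mul_X_pow t c hc] at hdeg
  have : (q : ℤ) ∣ (t : ℤ) := ⟨b.intDegree, hdeg.symm⟩
  exact hcop q hq hqs (Int.natCast_dvd_natCast.mp this)

private lemma irred_mv (c : K) (hc : c ≠ 0) {s t : ℕ}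
    (hs : Odd s) (hcop : ∀ q : ℕ, q.Prime → q ∣ s → ¬ q ∣ t) :
    Irreducible ((X 0 : MvPolynomial (Fin 2) K) ^ s - C c * X 1 ^ t) := by
  let e2 : MvPolynomial (Fin 1) K ≃ₐ[K] Polynomial K :=
    (renameEquiv K (Equiv.equivPUnit.{1,1} (Fin 1))).trans (pUnitAlgEquiv K)
  let E : MvPolynomial (Fin 2) K ≃+* Polynomial (Polynomial K) :=
    (finSuccEquiv K 1).toRingEquiv.trans (Polynomial.mapEquiv e2.toRingEquiv)
  rw [← MulEquiv.irreducible_iff E]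
  have h0 : E (X 0) = Polynomial.X := by
    simp [E, e2, finSuccEquiv_X_zero]
  have h1 : E (X 1) = Polynomial.C Polynomial.X := by
    have h10 : (X 1 : MvPolynomial (Fin 2) K) = X (Fin.succ 0) := rfl
    simp [E, e2, h10, finSuccEquiv_X_succ]
  have hC : E (C c) = Polynomial.C (Polynomial.C c) := by
    simp [E, e2, finSuccEquiv_apply, eval₂Hom_C, MvPolynomial.algebraMap_eq]
  rw [map_sub, map_pow, map_mul, map_pow, h0, h1, hC, ← Polynomial.C_pow,
    ← Polynomial.C_mul]
  exact irred_X_pow_sub_C_poly c hc hs hcop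

end AuxKummer

section WMap

variable {K : Type*} [Field K]

noncomputable def wmap (K : Type*) [Field K] (N M : ℕ) :
    MvPolynomial (Fin 2) K →+* Polynomial (MvPolynomial (Fin 2) K) :=
  eval₂Hom (Polynomial.C.comp MvPolynomial.C)
    ![Polynomial.C (X 0) * Polynomial.X ^ N, Polynomial.C (X 1) * Polynomial.X ^ M]

lemma wmap_monomial (N M : ℕ) (u : Fin 2 →₀ ℕ) (c : K) :
    wmap K N M (monomial u c)
      = Polynomial.monomial (u 0 * N + u 1 * M) (monomial u c) := by
  rw [wmap, eval₂Hom_monomial]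
  rw [Finsupp.prod_fintype _ _ (fun i => pow_zero _), Fin.prod_univ_two]
  rw [monomial_eq, Finsupp.prod_fintype _ _ (fun i => pow_zero _), Fin.prod_univ_two]
  rw [← Polynomial.C_mul_X_pow_eq_monomial]
  simp only [Matrix.cons_val_zero, Matrix.cons_val_one, Matrix.head_cons,
    RingHom.coe_comp, Function.comp_apply]
  rw [mul_pow, mul_pow, ← Polynomial.C_pow, ← Polynomial.C_pow, ← pow_mul, ← pow_mul]
  simp only [Polynomial.C_mul, pow_add]
  ring

lemma wmap_eval_one (N M : ℕ) (f : MvPolynomial (Fin 2) K) :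
    Polynomial.eval 1 (wmap K N M f) = f := by
  conv_rhs => rw [f.as_sum]
  conv_lhs => rw [f.as_sum]
  rw [map_sum, Polynomial.eval_finset_sum]
  refine Finset.sum_congr rfl fun u hu => ?_
  rw [wmap_monomial, Polynomial.eval_monomial, one_pow, mul_one]

lemma wmap_exponent_eq_zero {N M : ℕ} {f : MvPolynomial (Fin 2) K} {e : ℕ}
    (h : constantCoeff ((wmap K N M f).coeff e) ≠ 0) : e = 0 := by
  by_contra he
  apply h
  conv_lhs => rw [f.as_sum]
  rw [map_sum, Polynomial.finset_sum_coeff, map_sum]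
  refine Finset.sum_eq_zero fun u hu => ?_
  rw [wmap_monomial, Polynomial.coeff_monomial]
  split_ifs with hw
  · rw [constantCoeff_monomial]
    split_ifs with hu0
    · exfalso; apply he; rw [← hw, hu0]; simp
    · rfl
  · rw [map_zero]

lemma wmap_isUnit {N M : ℕ} {f : MvPolynomial (Fin 2) K}
    (h : IsUnit ((wmap K N M f).leadingCoeff)) : IsUnit f := by
  have h0 : constantCoeff ((wmap K N M f).leadingCoeff) ≠ 0 :=
    (h.map constantCoeff).ne_zero
  have he : (wmap K N M f).natDegree = 0 := wmap_exponent_eq_zero h0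
  have hf : f = (wmap K N M f).leadingCoeff := by
    conv_lhs => rw [← wmap_eval_one N M f]
    rw [Polynomial.eq_C_of_natDegree_eq_zero he]
    simp [Polynomial.leadingCoeff]
  rw [hf]
  exact h

end WMap

/-- Let K be an algebraically closed field of characteristic p > 0. Let
`A(Y) = aₙ Y^(pⁿ) + ⋯ + a₁ Y^p + a₀ Y` be an additive p-polynomial over K with
n ≥ 1, a₀ ≠ 0, aₙ ≠ 0, and let B(X) ∈ K[X] with deg B = m ≥ 2 and p ∤ m.
Then A(Y) - B(X) is irreducible in K[X, Y]. -/
theorem additive_sub_separated_irreducible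
    {K : Type*} [Field K] [IsAlgClosed K] (p : ℕ) [Fact p.Prime] [CharP K p]
    (n : ℕ) (hn : 1 ≤ n) (a : ℕ → K) (ha0 : a 0 ≠ 0) (han : a n ≠ 0)
    (B : Polynomial K) (hm : 2 ≤ B.natDegree) (hpm : ¬ p ∣ B.natDegree) :
    Irreducible
      ((∑ k ∈ Finset.range (n + 1), C (a k) * (X 1 : MvPolynomial (Fin 2) K) ^ p ^ k)
        - Polynomial.aeval (X 0 : MvPolynomial (Fin 2) K) B) := by
  classical
  have hp : p.Prime := Fact.out
  set m := B.natDegree with hmdef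
  have hm0 : m ≠ 0 := by omega
  have hpn : p ^ n ≠ 0 := pow_ne_zero _ hp.pos.ne'
  have hB0 : B ≠ 0 := by
    intro h
    rw [hmdef, h, Polynomial.natDegree_zero] at hm
    omega
  set b := B.coeff m with hbdef
  have hbne : b ≠ 0 := by
    rw [hbdef, hmdef]
    exact Polynomial.leadingCoeff_ne_zero.mpr hB0
  set P : MvPolynomial (Fin 2) K :=
    (∑ k ∈ Finset.range (n + 1), C (a k) * (X 1 : MvPolynomial (Fin 2) K) ^ p ^ k)
      - Polynomial.aeval (X 0 : MvPolynomial (Fin 2) K) B with hP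
  set Φ := wmap K (p ^ n) m with hΦ
  set L : MvPolynomial (Fin 2) K := C (a n) * X 1 ^ p ^ n - C b * X 0 ^ m with hL
  -- the formula for Φ P
  have key : Φ P = (∑ k ∈ Finset.range (n + 1),
        Polynomial.monomial (p ^ k * m) (C (a k) * (X 1 : MvPolynomial (Fin 2) K) ^ p ^ k))
      - ∑ j ∈ Finset.range (m + 1),
        Polynomial.monomial (j * p ^ n) (C (B.coeff j) * (X 0 : MvPolynomial (Fin 2) K) ^ j) := by
    rw [hP, map_sub]
    congr 1
    · rw [map_sum]
      refine Finset.sum_congr rfl fun k hk => ?_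
      rw [C_mul_X_pow_eq_monomial, hΦ, wmap_monomial]
      have h0 : (Finsupp.single (1 : Fin 2) (p ^ k)) 0 = 0 :=
        Finsupp.single_eq_of_ne (by decide)
      have h1 : (Finsupp.single (1 : Fin 2) (p ^ k)) 1 = p ^ k := Finsupp.single_eq_same
      rw [h0, h1, zero_mul, zero_add]
    · rw [Polynomial.aeval_eq_sum_range, ← hmdef, map_sum]
      refine Finset.sum_congr rfl fun j hj => ?_
      rw [MvPolynomial.smul_eq_C_mul, C_mul_X_pow_eq_monomial, hΦ, wmap_monomial]
      have h0 : (Finsupp.single (0 : Fin 2) j) 0 = j := Finsupp.single_eq_same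
      have h1 : (Finsupp.single (0 : Fin 2) j) 1 = 0 :=
        Finsupp.single_eq_of_ne (by decide)
      rw [h0, h1, zero_mul, add_zero]
  have hcoD : (Φ P).coeff (p ^ n * m) = L := by
    rw [key, Polynomial.coeff_sub, Polynomial.finset_sum_coeff, Polynomial.finset_sum_coeff]
    rw [Finset.sum_eq_single_of_mem n (Finset.self_mem_range_succ n), hL,
      Finset.sum_eq_single_of_mem m (Finset.self_mem_range_succ m)]
    · rw [Polynomial.coeff_monomial, Polynomial.coeff_monomial,
        if_pos rfl, if_pos (mul_comm m (p ^ n)), ← hbdef]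
    · intro j hj hjne
      have hj' : j < m + 1 := Finset.mem_range.mp hj
      have hlt : j * p ^ n < m * p ^ n :=
        (Nat.mul_lt_mul_right (Nat.pos_of_ne_zero hpn)).mpr (by omega)
      rw [Polynomial.coeff_monomial, if_neg (by rw [mul_comm (p ^ n) m]; exact ne_of_lt hlt)]
    · intro k hk hkne
      have hk' : k < n + 1 := Finset.mem_range.mp hk
      have hlt : p ^ k < p ^ n := Nat.pow_lt_pow_right hp.one_lt (by omega)
      have hlt' : p ^ k * m < p ^ n * m :=
        (Nat.mul_lt_mul_right (Nat.pos_of_ne_zero hm0)).mpr hlt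
      rw [Polynomial.coeff_monomial, if_neg (ne_of_lt hlt')]
  have hLne : L ≠ 0 := by
    intro h
    have hcoeff := congrArg (coeff (Finsupp.single 1 (p ^ n))) h
    rw [hL, coeff_sub, C_mul_X_pow_eq_monomial, C_mul_X_pow_eq_monomial,
      coeff_zero, coeff_monomial, coeff_monomial, if_pos rfl, if_neg] at hcoeff
    · simp at hcoeff; exact han hcoeff
    · intro hss
      have := congrArg (fun f : Fin 2 →₀ ℕ => f 0) hss
      simp [Finsupp.single_eq_of_ne (show (1 : Fin 2) ≠ 0 by decide)] at this
      exact hm0 this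
  have hdeg : (Φ P).natDegree = p ^ n * m := by
    refine le_antisymm ?_ (Polynomial.le_natDegree_of_ne_zero ?_)
    · rw [key]
      refine le_trans (Polynomial.natDegree_sub_le _ _) (max_le ?_ ?_)
      · refine Polynomial.natDegree_sum_le_of_forall_le _ _ fun k hk =>
          le_trans (Polynomial.natDegree_monomial_le _) ?_
        have hk' : k ≤ n := by have := Finset.mem_range.mp hk; omega
        exact Nat.mul_le_mul_right _ (Nat.pow_le_pow_right hp.pos hk')
      · refine Polynomial.natDegree_sum_le_of_forall_le _ _ fun j hj =>
          le_trans (Polynomial.natDegree_monomial_le _) ?_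
        have hj' : j ≤ m := by have := Finset.mem_range.mp hj; omega
        rw [mul_comm (p ^ n) m]
        exact Nat.mul_le_mul_right _ hj'
    · rw [hcoD]; exact hLne
  have hlc : (Φ P).leadingCoeff = L := by
    rw [Polynomial.leadingCoeff, hdeg, hcoD]
  have hirr : Irreducible L := by
    rcases Nat.even_or_odd m with hme | hmo
    · -- m even, so p is odd
      have hp2 : p ≠ 2 := by rintro rfl; exact hpm hme.two_dvd
      have hodd : Odd (p ^ n) := (hp.odd_of_ne_two hp2).pow
      have hrw : L = C (a n) * (rename (Equiv.swap (0 : Fin 2) 1))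
          ((X 0 : MvPolynomial (Fin 2) K) ^ p ^ n - C (b / a n) * X 1 ^ m) := by
        rw [map_sub, map_mul, map_pow, map_pow, rename_X, rename_X, rename_C,
          Equiv.swap_apply_left, Equiv.swap_apply_right, hL, mul_sub,
          ← mul_assoc, ← C_mul, mul_div_cancel₀ b han]
      rw [hrw, irreducible_isUnit_mul ((han.isUnit.map (MvPolynomial.C : K →+* MvPolynomial (Fin 2) K)))]
      have : (rename (Equiv.swap (0 : Fin 2) 1))
          ((X 0 : MvPolynomial (Fin 2) K) ^ p ^ n - C (b / a n) * X 1 ^ m)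
          = renameEquiv K (Equiv.swap (0 : Fin 2) 1)
          ((X 0 : MvPolynomial (Fin 2) K) ^ p ^ n - C (b / a n) * X 1 ^ m) := rfl
      rw [this, MulEquiv.irreducible_iff]
      refine irred_mv _ (div_ne_zero hbne han) hodd fun q hq hqs hqt => ?_
      have hq' : q = p := (Nat.prime_dvd_prime_iff_eq hq hp).mp (hq.dvd_of_dvd_pow hqs)
      exact hpm (hq' ▸ hqt)
    · -- m odd
      have hrw : L = (-C b) * ((X 0 : MvPolynomial (Fin 2) K) ^ m
          - C (a n / b) * X 1 ^ p ^ n) := by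
        rw [hL, neg_mul, mul_sub, neg_sub, ← mul_assoc, ← C_mul,
          mul_div_cancel₀ (a n) hbne]
      rw [hrw, irreducible_isUnit_mul ((hbne.isUnit.map (MvPolynomial.C : K →+* MvPolynomial (Fin 2) K)).neg)]
      refine irred_mv _ (div_ne_zero han hbne) hmo fun q hq hqs hqt => ?_
      have hq' : q = p := (Nat.prime_dvd_prime_iff_eq hq hp).mp (hq.dvd_of_dvd_pow hqt)
      exact hpm (hq' ▸ hqs)
  rw [irreducible_iff]
  constructor
  · intro hu
    have h1 := hu.map Φ
    have h2 := Polynomial.natDegree_eq_of_degree_eq_some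
      (Polynomial.degree_eq_zero_of_isUnit h1)
    rw [hdeg] at h2
    exact Nat.mul_ne_zero hpn hm0 h2
  · intro f g hfg
    have hmul : L = (Φ f).leadingCoeff * (Φ g).leadingCoeff := by
      rw [← Polynomial.leadingCoeff_mul, ← map_mul, ← hfg, hlc]
    rcases hirr.isUnit_or_isUnit hmul with h | h
    · exact Or.inl (wmap_isUnit h)
    · exact Or.inr (wmap_isUnit h)
end

section
/- Let p be a prime, let q = p^n \geq 3 be a power of p, and let K be an algebraically closed field of characteristic p. Then the bivariate polynomial Y^q + Y - X^{q-1} is irreducible in K[X, Y]. -/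
open MvPolynomial

/-- Let p be a prime, q = pⁿ ≥ 3 a power of p, and K an algebraically closed field
of characteristic p. Then Y^q + Y - X^(q-1) is irreducible in K[X, Y]. -/
theorem artin_schreier_like_irreducible
    {K : Type*} [Field K] [IsAlgClosed K] (p n q : ℕ) [Fact p.Prime] [CharP K p]
    (hq : q = p ^ n) (h3 : 3 ≤ q) :
    Irreducible
      ((X 1 : MvPolynomial (Fin 2) K) ^ q + X 1 - (X 0 : MvPolynomial (Fin 2) K) ^ (q - 1)) := by
  classical
  set R := MvPolynomial (Fin 1) K with hR
  let e : MvPolynomial (Fin 2) K ≃ₐ[K] Polynomial R := MvPolynomial.finSuccEquiv K 1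
  rw [← MulEquiv.irreducible_iff e.toMulEquiv]
  set c : R := X 0 ^ q + X 0 with hc
  have h10 : (X 1 : MvPolynomial (Fin 2) K) = X (Fin.succ 0) := rfl
  have he : e.toMulEquiv ((X 1 : MvPolynomial (Fin 2) K) ^ q + X 1 - X 0 ^ (q - 1))
      = Polynomial.C c - Polynomial.X ^ (q - 1) := by
    show e _ = _
    rw [map_sub, map_add, map_pow, map_pow, h10, MvPolynomial.finSuccEquiv_X_succ,
      MvPolynomial.finSuccEquiv_X_zero, hc, map_add, map_pow]
  rw [he, ← neg_sub]
  -- Prime (X 0 : R)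
  have hXp : Prime (X 0 : R) := by
    let σ : R ≃ₐ[K] Polynomial K :=
      (MvPolynomial.renameEquiv K (Equiv.equivPUnit.{1,1} (Fin 1))).trans (MvPolynomial.pUnitAlgEquiv K)
    rw [← MulEquiv.prime_iff σ.toMulEquiv]
    have hσ : σ.toMulEquiv (X 0 : R) = Polynomial.X := by
      simp [σ, MvPolynomial.renameEquiv]
    rw [hσ]
    exact Polynomial.prime_X
  have hX0 : (X 0 : R) ≠ 0 := hXp.ne_zero
  have hPprime : (Ideal.span {(X 0 : R)}).IsPrime :=
    (Ideal.span_singleton_prime hX0).mpr hXp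
  have hm0 : q - 1 ≠ 0 := by omega
  have hmon : (Polynomial.X ^ (q - 1) - Polynomial.C c : Polynomial R).Monic :=
    Polynomial.monic_X_pow_sub_C c hm0
  have hdvd : (X 0 : R) ∣ c := by
    rw [hc]
    exact dvd_add (dvd_pow_self _ (by omega)) dvd_rfl
  have hnotdvd : ¬ (X 0 : R) ^ 2 ∣ c := by
    intro hd
    have h1 : (X 0 : R) ^ 2 ∣ X 0 ^ q := pow_dvd_pow _ (by omega)
    have h2 : (X 0 : R) ^ 2 ∣ X 0 := by
      have := dvd_sub hd h1
      rwa [hc, add_sub_cancel_left] at this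
    obtain ⟨t, ht⟩ := h2
    have : (X 0 : R) * 1 = X 0 * (X 0 * t) := by
      rw [mul_one, ← mul_assoc, ← sq]; exact ht
    have : (1 : R) = X 0 * t := mul_left_cancel₀ hX0 this
    exact hXp.not_isUnit (IsUnit.of_mul_eq_one _ this.symm)
  have hE : (Polynomial.X ^ (q - 1) - Polynomial.C c : Polynomial R).IsEisensteinAt
      (Ideal.span {(X 0 : R)}) := by
    constructor
    · rw [hmon.leadingCoeff]
      intro h
      exact hXp.not_isUnit (isUnit_of_dvd_one (Ideal.mem_span_singleton.mp h))
    · intro i hi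
      rw [Polynomial.natDegree_X_pow_sub_C] at hi
      rw [Polynomial.coeff_sub, Polynomial.coeff_X_pow, if_neg (by omega), Polynomial.coeff_C]
      rcases eq_or_ne i 0 with rfl | h0
      · rw [if_pos rfl, zero_sub]
        exact Ideal.mem_span_singleton.mpr (dvd_neg.mpr hdvd)
      · rw [if_neg h0, sub_zero]
        exact Ideal.zero_mem _
    · rw [Polynomial.coeff_sub, Polynomial.coeff_X_pow, if_neg (by omega), Polynomial.coeff_C,
        if_pos rfl, zero_sub, Ideal.span_singleton_pow, Ideal.mem_span_singleton, dvd_neg]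
      exact hnotdvd
  have hirr := hE.irreducible hPprime hmon.isPrimitive
    (by rw [Polynomial.natDegree_X_pow_sub_C]; omega)
  exact (Associated.irreducible ⟨-1, by simp⟩ hirr)
end

section
/- Let q \geq 2 be an integer and let r be an integer with r \geq (q-1)(q-2) - 1. Then the number of pairs (i, j) of nonnegative integers with 0 \leq j \leq q-1 and i\,q + j\,(q-1) \leq r equals r + 1 - (q-1)(q-2)/2. -/
open Finset

lemma aux_sum_ediv_step (q : ℕ) (hq : 1 ≤ q) (r : ℤ) :
    ∑ j ∈ range q, (r + 1 + (j:ℤ)) / (q:ℤ) = (∑ j ∈ range q, (r + (j:ℤ)) / (q:ℤ)) + 1 := by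
  have hq0 : (q:ℤ) ≠ 0 := by positivity
  have h1 : ∑ j ∈ range q, (r + 1 + (j:ℤ)) / (q:ℤ)
      = ∑ j ∈ range q, (r + ((j+1 : ℕ):ℤ)) / (q:ℤ) := by
    refine Finset.sum_congr rfl fun j _ => ?_
    push_cast; ring_nf
  rw [h1]
  have h2 := Finset.sum_range_succ' (fun j : ℕ => (r + (j:ℤ)) / (q:ℤ)) q
  have h3 := Finset.sum_range_succ (fun j : ℕ => (r + (j:ℤ)) / (q:ℤ)) q
  have h4 : (r + (q:ℤ)) / (q:ℤ) = r / (q:ℤ) + 1 := by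
    have := Int.add_mul_ediv_right r 1 hq0
    simpa using this
  rw [h3] at h2
  -- h2 : sum_{j<q} f j + f q = sum_{j<q} f (j+1) + f 0
  have : ∑ x ∈ range q, (r + ((x+1:ℕ):ℤ)) / (q:ℤ)
      = ∑ j ∈ range q, (r + (j:ℤ)) / (q:ℤ) + (r + (q:ℤ)) / (q:ℤ) - (r + ((0:ℕ):ℤ)) / (q:ℤ) := by
    omega
  rw [this, h4]
  push_cast
  ring

lemma aux_sum_ediv (q : ℕ) (hq : 1 ≤ q) (r : ℤ) :
    ∑ j ∈ range q, (r + (j:ℤ)) / (q:ℤ) = r := by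
  induction r using Int.induction_on with
  | zero =>
    refine Finset.sum_eq_zero fun j hj => ?_
    have hj' : (j:ℤ) < (q:ℤ) := by exact_mod_cast mem_range.mp hj
    rw [zero_add]
    exact Int.ediv_eq_zero_of_lt (by positivity) hj'
  | succ k ih =>
    have := aux_sum_ediv_step q hq (k:ℤ)
    push_cast at *
    omega
  | pred k ih =>
    have := aux_sum_ediv_step q hq (-(k:ℤ) - 1)
    have e : (-(k:ℤ) - 1) + 1 = -(k:ℤ) := by ring
    rw [e] at this
    push_cast at *
    omega

/-- Let q ≥ 2 and r an integer with r ≥ (q-1)(q-2) - 1. The number of pairs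
(i, j) of naturals with j ≤ q-1 and i·q + j·(q-1) ≤ r equals r + 1 - (q-1)(q-2)/2. -/
theorem count_pairs_riemann_roch_range (q : ℕ) (hq : 2 ≤ q) (r : ℤ)
    (hr : ((q : ℤ) - 1) * ((q : ℤ) - 2) - 1 ≤ r) :
    ({ij : ℕ × ℕ | ij.2 ≤ q - 1 ∧ ((ij.1 : ℤ) * q + (ij.2 : ℤ) * ((q : ℤ) - 1) ≤ r)}.ncard : ℤ)
      = r + 1 - ((q : ℤ) - 1) * ((q : ℤ) - 2) / 2 := by
  have hq2 : (2:ℤ) ≤ (q:ℤ) := by exact_mod_cast hq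
  have hq1 : (1:ℤ) ≤ (q:ℤ) - 1 := by linarith
  have hr0 : (-1:ℤ) ≤ r := by nlinarith
  set M := r.toNat + 1 with hM
  have hMr : r < (M:ℤ) := by simp [hM]
  set S : Finset (ℕ × ℕ) := (range M ×ˢ range q).filter
    (fun ij => ij.2 ≤ q - 1 ∧ ((ij.1 : ℤ) * q + (ij.2 : ℤ) * ((q : ℤ) - 1) ≤ r)) with hS
  have hset : {ij : ℕ × ℕ | ij.2 ≤ q - 1 ∧ ((ij.1 : ℤ) * q + (ij.2 : ℤ) * ((q : ℤ) - 1) ≤ r)}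
      = (S : Set (ℕ × ℕ)) := by
    ext ⟨i, j⟩
    simp only [Set.mem_setOf_eq, hS, coe_filter, mem_product, mem_range]
    constructor
    · rintro ⟨h1, h2⟩
      refine ⟨⟨?_, ?_⟩, h1, h2⟩
      · have hi : (i:ℤ) ≤ r := by nlinarith [Int.natCast_nonneg i, Int.natCast_nonneg j]
        omega
      · omega
    · rintro ⟨_, h1, h2⟩; exact ⟨h1, h2⟩
  rw [hset, Set.ncard_coe_finset]
  have hq0 : (q:ℤ) ≠ 0 := by linarith
  have hqpos : (0:ℤ) < (q:ℤ) := by linarith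
  -- per-column truncation point
  set t : ℕ → ℤ := fun j => (r - (j:ℤ) * ((q:ℤ) - 1)) / (q:ℤ) with ht
  have ht1 : ∀ j : ℕ, j < q → -1 ≤ t j := by
    intro j hj
    have hnum : -(q:ℤ) ≤ r - (j:ℤ) * ((q:ℤ) - 1) := by
      have hjq : (j:ℤ) ≤ (q:ℤ) - 1 := by
        have : (j:ℤ) < (q:ℤ) := by exact_mod_cast hj
        linarith
      nlinarith
    have := Int.ediv_le_ediv hqpos hnum
    have hneg : (-(q:ℤ)) / (q:ℤ) = -1 := by
      rw [Int.neg_ediv_of_dvd ⟨1, by ring⟩, Int.ediv_self hq0]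
    rw [hneg] at this
    exact this
  have ht2 : ∀ j : ℕ, t j ≤ r := by
    intro j
    rcases le_or_gt 0 (r - (j:ℤ) * ((q:ℤ) - 1)) with h | h
    · calc t j ≤ r - (j:ℤ) * ((q:ℤ) - 1) := Int.ediv_le_self _ h
        _ ≤ r := by nlinarith [Int.natCast_nonneg j]
    · have : t j < 0 := Int.ediv_neg_of_neg_of_pos h hqpos
      omega
  -- fiberwise count
  have hfib : S.card = ∑ j ∈ range q, ((range M).filter
      (fun i : ℕ => (i:ℤ) * q + (j:ℤ) * ((q:ℤ) - 1) ≤ r)).card := by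
    rw [Finset.card_eq_sum_card_fiberwise (f := Prod.snd) (s := S) (t := range q)
      (fun p hp => by simp only [Finset.mem_coe, hS, mem_filter, mem_product] at hp; exact hp.1.2)]
    refine Finset.sum_congr rfl fun j hj => ?_
    refine Finset.card_bij (fun p _ => p.1) ?_ ?_ ?_
    · rintro ⟨i, j'⟩ hp
      simp only [hS, mem_filter, mem_product] at hp ⊢
      obtain ⟨⟨⟨hi, _⟩, _, hineq⟩, hj'⟩ := hp
      subst hj'
      exact ⟨hi, hineq⟩
    · rintro ⟨i1, j1⟩ h1 ⟨i2, j2⟩ h2 he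
      simp only [hS, mem_filter] at h1 h2
      simp only [Prod.mk.injEq]
      exact ⟨he, h1.2.trans h2.2.symm⟩
    · intro i hi
      simp only [mem_filter, mem_range] at hi
      refine ⟨(i, j), ?_, rfl⟩
      simp only [hS, mem_filter, mem_product, mem_range]
      have hjq : j < q := mem_range.mp hj
      exact ⟨⟨⟨hi.1, hjq⟩, by omega, hi.2⟩, trivial⟩
  -- each column is an initial segment
  have hcol : ∀ j : ℕ, j < q → ((range M).filter
      (fun i : ℕ => (i:ℤ) * q + (j:ℤ) * ((q:ℤ) - 1) ≤ r)).card = (t j + 1).toNat := by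
    intro j hj
    have hiff : ∀ i : ℕ, ((i:ℤ) * q + (j:ℤ) * ((q:ℤ) - 1) ≤ r) ↔ (i:ℤ) ≤ t j := by
      intro i
      rw [ht]
      rw [Int.le_ediv_iff_mul_le hqpos]
      constructor <;> intro h <;> linarith
    have : (range M).filter (fun i : ℕ => (i:ℤ) * q + (j:ℤ) * ((q:ℤ) - 1) ≤ r)
        = range ((t j + 1).toNat) := by
      ext i
      simp only [mem_filter, mem_range, hiff]
      have h1 := ht1 j hj
      have h2 := ht2 j
      omega
    rw [this, Finset.card_range]
  have hcard : (S.card : ℤ) = ∑ j ∈ range q, (t j + 1) := by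
    rw [hfib]
    push_cast
    refine Finset.sum_congr rfl fun j hj => ?_
    rw [hcol j (mem_range.mp hj), Int.toNat_of_nonneg (by have := ht1 j (mem_range.mp hj); omega)]
  rw [hcard]
  -- evaluate the sum
  have hdecomp : ∀ j : ℕ, t j = (r + (j:ℤ)) / (q:ℤ) - (j:ℤ) := by
    intro j
    rw [ht]
    have e : r - (j:ℤ) * ((q:ℤ) - 1) = (r + (j:ℤ)) + (-(j:ℤ)) * (q:ℤ) := by ring
    simp only [e, Int.add_mul_ediv_right _ _ hq0]
    ring
  have hsum : ∑ j ∈ range q, (t j + 1)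
      = (∑ j ∈ range q, (r + (j:ℤ)) / (q:ℤ)) - (∑ j ∈ range q, (j:ℤ)) + q := by
    rw [Finset.sum_congr rfl fun j _ => by rw [hdecomp j]]
    rw [Finset.sum_add_distrib, Finset.sum_sub_distrib]
    simp [mul_comm]
  rw [hsum, aux_sum_ediv q (by omega) r]
  have hgauss : 2 * (∑ j ∈ range q, (j:ℤ)) = (q:ℤ) * ((q:ℤ) - 1) := by
    have h2 : ((∑ j ∈ range q, j) * 2 : ℕ) = q * (q - 1) := Finset.sum_range_id_mul_two q
    have h3 : (((∑ j ∈ range q, j) * 2 : ℕ) : ℤ) = ((q * (q - 1) : ℕ) : ℤ) := by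
      exact_mod_cast h2
    push_cast [Nat.cast_sub (by omega : 1 ≤ q)] at h3
    linarith
  have hB : 2 * (((q:ℤ) - 1) * ((q:ℤ) - 2) / 2) = ((q:ℤ) - 1) * ((q:ℤ) - 2) := by
    apply Int.two_mul_ediv_two_of_even
    rcases Int.even_or_odd ((q:ℤ) - 1) with h | h
    · exact h.mul_right _
    · refine Even.mul_left ?_ _
      rcases h with ⟨k, hk⟩
      exact ⟨k, by omega⟩
  have hAB : (q:ℤ) * ((q:ℤ) - 1) - ((q:ℤ) - 1) * ((q:ℤ) - 2) = 2 * ((q:ℤ) - 1) := by ring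
  linarith
end

section
/- Let p be a prime and q = p^n \geq 3 a power of p, and let \mathbb{F}_{q^2} be the finite field with q^2 elements. Then the number of pairs (a, b) \in \mathbb{F}_{q^2} \times \mathbb{F}_{q^2} satisfying b^q + b = a^{q-1} equals q\,\bigl(1 + (q-1)\gcd(q-1, q+1)\bigr). -/
open Finset Polynomial

lemma aux_card_pow_eq_one (F : Type*) [Field F] [Fintype F] [DecidableEq F] {d : ℕ}
    (hd0 : 0 < d) (hd : d ∣ Fintype.card F - 1) :
    (Finset.univ.filter fun x : F => x ^ d = 1).card = d := by
  have hcard1 : 1 < Fintype.card F := Fintype.one_lt_card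
  set N := Fintype.card F - 1 with hN
  have hN0 : 0 < N := by omega
  obtain ⟨g, hg⟩ := IsCyclic.exists_generator (α := Fˣ)
  have horder : orderOf g = N := by
    rw [orderOf_eq_card_of_forall_mem_zpowers hg, Nat.card_eq_fintype_card, Fintype.card_units]
  have hdvd : N / d ∣ N := Nat.div_dvd_of_dvd hd
  have horder2 : orderOf (g ^ (N / d)) = d := by
    rw [orderOf_pow, horder, Nat.gcd_eq_right hdvd, Nat.div_div_self hd hN0.ne']
  have hprim : IsPrimitiveRoot ((g ^ (N / d) : Fˣ) : F) d := by
    rw [IsPrimitiveRoot.coe_units_iff]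
    have := IsPrimitiveRoot.orderOf (g ^ (N / d))
    rwa [horder2] at this
  have hset : (Finset.univ.filter fun x : F => x ^ d = 1) = nthRootsFinset d (1 : F) := by
    ext x
    simp [Polynomial.mem_nthRootsFinset hd0]
  rw [hset, hprim.card_nthRootsFinset]

lemma aux_card_pow_eq_one_gcd (F : Type*) [Field F] [Fintype F] [DecidableEq F] {m : ℕ}
    (hm0 : 0 < m) :
    (Finset.univ.filter fun x : F => x ^ m = 1).card = Nat.gcd m (Fintype.card F - 1) := by
  set N := Fintype.card F - 1 with hN
  set d := Nat.gcd m N with hd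
  have hd0 : 0 < d := Nat.gcd_pos_of_pos_left _ hm0
  have hdN : d ∣ N := Nat.gcd_dvd_right _ _
  have hdm : d ∣ m := Nat.gcd_dvd_left _ _
  have hset : (Finset.univ.filter fun x : F => x ^ m = 1)
      = (Finset.univ.filter fun x : F => x ^ d = 1) := by
    ext x
    simp only [Finset.mem_filter, Finset.mem_univ, true_and]
    constructor
    · intro hx
      have hx0 : x ≠ 0 := by
        rintro rfl
        rw [zero_pow hm0.ne'] at hx
        exact zero_ne_one hx
      set u := Units.mk0 x hx0 with hu
      have hum : u ^ m = 1 := by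
        ext
        simpa [hu] using hx
      have hud : u ^ d = 1 := by
        have h2 : u ^ Nat.gcd m (Fintype.card Fˣ) = 1 := pow_gcd_eq_one.mpr ⟨hum, pow_card_eq_one⟩
        rwa [Fintype.card_units, ← hN, ← hd] at h2
      calc x ^ d = ((u ^ d : Fˣ) : F) := by simp [hu]
        _ = 1 := by rw [hud]; rfl
    · intro hx
      obtain ⟨k, hk⟩ := hdm
      rw [hk, pow_mul, hx, one_pow]
  rw [hset]
  exact aux_card_pow_eq_one F hd0 hdN

lemma aux_card_roots_le (F : Type*) [Field F] [Fintype F] [DecidableEq F] {q : ℕ}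
    (hq : 2 ≤ q) (c : F) :
    (Finset.univ.filter fun x : F => x ^ q = c * x).card ≤ q := by
  set f : Polynomial F := Polynomial.X ^ q - Polynomial.C c * Polynomial.X with hf
  have hdeg : f.natDegree = q := by
    rw [hf]
    compute_degree
    · rw [if_neg (by omega : ¬ q = 1)]
      simp
    · omega
    · omega
  have hf0 : f ≠ 0 := by
    intro h
    rw [h, Polynomial.natDegree_zero] at hdeg
    omega
  have hsub : (Finset.univ.filter fun x : F => x ^ q = c * x) ⊆ f.roots.toFinset := by
    intro x hx
    simp only [Finset.mem_filter, Finset.mem_univ, true_and] at hx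
    rw [Multiset.mem_toFinset, Polynomial.mem_roots hf0]
    simp [Polynomial.IsRoot, hf, hx]
  calc (Finset.univ.filter fun x : F => x ^ q = c * x).card
      ≤ f.roots.toFinset.card := Finset.card_le_card hsub
    _ ≤ Multiset.card f.roots := Multiset.toFinset_card_le _
    _ ≤ f.natDegree := f.card_roots'
    _ = q := hdeg

/-- Let p be prime, q = pⁿ ≥ 3, and F the finite field with q² elements. The number
of pairs (a, b) ∈ F × F with b^q + b = a^(q-1) equals q(1 + (q-1)·gcd(q-1, q+1)). -/
theorem affine_point_count (p n q : ℕ) [Fact p.Prime] (hq : q = p ^ n) (h3 : 3 ≤ q)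
    (F : Type*) [Field F] [Fintype F] (hF : Fintype.card F = q ^ 2) :
    {ab : F × F | ab.2 ^ q + ab.2 = ab.1 ^ (q - 1)}.ncard
      = q * (1 + (q - 1) * Nat.gcd (q - 1) (q + 1)) := by
  classical
  have hq0 : 0 < q := by omega
  have hp : p.Prime := Fact.out
  have hn0 : n ≠ 0 := by
    rintro rfl
    rw [pow_zero] at hq
    omega
  -- characteristic
  haveI hchar : CharP F p := by
    haveI hr : CharP F (ringChar F) := ringChar.charP F
    obtain ⟨m, hrp, hcard⟩ := FiniteField.card F (ringChar F)
    have heq : p ^ (n * 2) = ringChar F ^ (m : ℕ) := by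
      rw [← hcard, hF, hq]
      ring
    have hdvd : p ∣ ringChar F ^ (m : ℕ) := by
      rw [← heq]
      exact dvd_pow_self p (by omega)
    have : p = ringChar F :=
      (Nat.prime_dvd_prime_iff_eq hp hrp).mp (hp.dvd_of_dvd_pow hdvd)
    rwa [this]
  have hfrob : ∀ x y : F, (x + y) ^ q = x ^ q + y ^ q := by
    intro x y
    rw [hq]
    exact add_pow_char_pow ..
  have hpowq2 : ∀ x : F, (x ^ q) ^ q = x := by
    intro x
    rw [← pow_mul, show q * q = q ^ 2 by ring, ← hF]
    exact FiniteField.pow_card x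
  set Φ : F → F := fun b => b ^ q + b with hΦ
  have hΦadd : ∀ x y : F, Φ (x + y) = Φ x + Φ y := by
    intro x y
    simp only [hΦ, hfrob]
    ring
  have hΦsub : ∀ x y : F, Φ (x - y) = Φ x - Φ y := by
    intro x y
    have h := hΦadd (x - y) y
    rw [sub_add_cancel] at h
    rw [h]
    ring
  set E := Finset.univ.filter fun x : F => x ^ q = x with hE
  have hΦmem : ∀ b : F, Φ b ∈ E := by
    intro b
    simp only [hE, Finset.mem_filter, Finset.mem_univ, true_and, hΦ]
    rw [hfrob, hpowq2]
    ring
  have hEle : E.card ≤ q := by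
    have h1 : E = Finset.univ.filter fun x : F => x ^ q = 1 * x := by
      simp [hE]
    rw [h1]
    exact aux_card_roots_le F (by omega) 1
  set K := Finset.univ.filter fun b : F => Φ b = 0 with hK
  have hKle : K.card ≤ q := by
    have h1 : K = Finset.univ.filter fun x : F => x ^ q = (-1) * x := by
      ext x
      simp only [hK, hΦ, Finset.mem_filter, Finset.mem_univ, true_and, neg_one_mul,
        add_eq_zero_iff_eq_neg]
    rw [h1]
    exact aux_card_roots_le F (by omega) (-1)
  have hfibcard : ∀ c ∈ Finset.image Φ Finset.univ,
      (Finset.univ.filter fun b : F => Φ b = c).card = K.card := by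
    intro c hc
    obtain ⟨b₀, -, hb₀⟩ := Finset.mem_image.mp hc
    apply Finset.card_nbij' (fun b => b - b₀) (fun b => b + b₀)
    · intro b hb
      rw [Finset.mem_coe] at hb ⊢
      simp only [Finset.mem_filter, Finset.mem_univ, true_and] at hb ⊢
      rw [hK, Finset.mem_filter]
      refine ⟨Finset.mem_univ _, ?_⟩
      rw [hΦsub, hb, hb₀, sub_self]
    · intro b hb
      rw [Finset.mem_coe] at hb ⊢
      rw [hK, Finset.mem_filter] at hb
      simp only [Finset.mem_filter, Finset.mem_univ, true_and]
      rw [hΦadd, hb.2, hb₀, zero_add]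
    · intro b _; simp
    · intro b _; simp
  have hpart : (Finset.image Φ Finset.univ).card * K.card = q ^ 2 := by
    have h1 : (Finset.univ : Finset F).card
        = ∑ c ∈ Finset.image Φ Finset.univ, (Finset.univ.filter fun b : F => Φ b = c).card :=
      Finset.card_eq_sum_card_fiberwise fun b _ => Finset.mem_image_of_mem Φ (Finset.mem_univ b)
    rw [Finset.card_univ, hF, Finset.sum_congr rfl hfibcard, Finset.sum_const, smul_eq_mul] at h1
    exact h1.symm
  have himsub : Finset.image Φ Finset.univ ⊆ E := by
    intro c hc
    obtain ⟨b, -, rfl⟩ := Finset.mem_image.mp hc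
    exact hΦmem b
  have himle : (Finset.image Φ Finset.univ).card ≤ q :=
    le_trans (Finset.card_le_card himsub) hEle
  have hKq : K.card = q := by
    have h2 : q ≤ K.card := by
      have h3' : q * q ≤ q * K.card := by
        calc q * q = q ^ 2 := by ring
          _ = (Finset.image Φ Finset.univ).card * K.card := hpart.symm
          _ ≤ q * K.card := Nat.mul_le_mul_right _ himle
      exact Nat.le_of_mul_le_mul_left h3' hq0
    exact le_antisymm hKle h2
  have himq : (Finset.image Φ Finset.univ).card = q := by
    have := hpart
    rw [hKq, show q ^ 2 = q * q by ring] at this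
    exact Nat.eq_of_mul_eq_mul_right hq0 this
  have himE : Finset.image Φ Finset.univ = E :=
    Finset.eq_of_subset_of_card_le himsub (by rw [himq]; exact hEle)
  have hfib : ∀ c : F, (Finset.univ.filter fun b : F => Φ b = c).card
      = if c ∈ E then q else 0 := by
    intro c
    by_cases hc : c ∈ E
    · rw [if_pos hc, hfibcard c (himE ▸ hc), hKq]
    · rw [if_neg hc, Finset.card_eq_zero, Finset.filter_eq_empty_iff]
      intro b _
      intro hb
      exact hc (hb ▸ hΦmem b)
  -- convert ncard to a Finset card
  have hS : {ab : F × F | ab.2 ^ q + ab.2 = ab.1 ^ (q - 1)}.ncard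
      = (Finset.univ.filter fun ab : F × F => ab.2 ^ q + ab.2 = ab.1 ^ (q - 1)).card := by
    have h1 : {ab : F × F | ab.2 ^ q + ab.2 = ab.1 ^ (q - 1)}
        = ↑(Finset.univ.filter fun ab : F × F => ab.2 ^ q + ab.2 = ab.1 ^ (q - 1)) := by
      ext ab
      simp
    rw [h1, Set.ncard_coe_finset]
  have hsum : (Finset.univ.filter fun ab : F × F => ab.2 ^ q + ab.2 = ab.1 ^ (q - 1)).card
      = ∑ a : F, (Finset.univ.filter fun b : F => Φ b = a ^ (q - 1)).card := by
    rw [Finset.card_filter, Fintype.sum_prod_type]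
    refine Finset.sum_congr rfl fun a _ => ?_
    rw [Finset.card_filter]
  rw [hS, hsum, Finset.sum_congr rfl fun a _ => hfib (a ^ (q - 1)), ← Finset.sum_filter,
    Finset.sum_const, smul_eq_mul]
  -- count a with a^(q-1) ∈ E
  set m := (q - 1) * (q - 1) with hm
  have hm0 : 0 < m := Nat.mul_pos (by omega) (by omega)
  have hsplit : (q - 1) * q = (q - 1) + m := by
    rw [hm]
    cases' Nat.exists_eq_add_of_le (by omega : 1 ≤ q) with t ht
    subst ht
    simp only [Nat.add_sub_cancel_left]
    ring
  have hmem : ∀ a : F, (a ^ (q - 1) ∈ E) ↔ (a = 0 ∨ a ^ m = 1) := by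
    intro a
    simp only [hE, Finset.mem_filter, Finset.mem_univ, true_and]
    constructor
    · intro h
      by_cases ha : a = 0
      · exact Or.inl ha
      · right
        rw [← pow_mul, hsplit, pow_add] at h
        have hne : a ^ (q - 1) ≠ 0 := pow_ne_zero _ ha
        exact mul_left_cancel₀ hne (by rw [h, mul_one])
    · rintro (rfl | h1)
      · rw [zero_pow (by omega : q - 1 ≠ 0), zero_pow (by omega : q ≠ 0)]
      · rw [← pow_mul, hsplit, pow_add, h1, mul_one]
  have hins : (Finset.univ.filter fun a : F => a ^ (q - 1) ∈ E)
      = insert (0 : F) (Finset.univ.filter fun a : F => a ^ m = 1) := by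
    ext a
    simp only [Finset.mem_filter, Finset.mem_univ, true_and, Finset.mem_insert, hmem a]
  have h0notmem : (0 : F) ∉ Finset.univ.filter fun a : F => a ^ m = 1 := by
    simp [zero_pow hm0.ne']
  have hAm : (Finset.univ.filter fun a : F => a ^ m = 1).card
      = (q - 1) * Nat.gcd (q - 1) (q + 1) := by
    rw [aux_card_pow_eq_one_gcd F hm0, hF]
    have e2 : q ^ 2 - 1 = (q - 1) * (q + 1) := by
      cases' Nat.exists_eq_add_of_le (by omega : 1 ≤ q) with t ht
      subst ht
      have h9 : (1 + t) ^ 2 = (1 + t - 1) * (1 + t + 1) + 1 := by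
        simp only [Nat.add_sub_cancel_left]
        ring
      omega
    rw [e2, hm, Nat.gcd_mul_left]
  rw [hins, Finset.card_insert_of_notMem h0notmem, hAm]
  ring
end

section
/- Let p be a prime, q = p^n \geq 3 a power of p, \mathbb{F}_{q^2} the field with q^2 elements, and S = \{ (a,b) \in \mathbb{F}_{q^2} \times \mathbb{F}_{q^2} : b^q + b = a^{q-1} \}. Let r be a natural number and let f \in \mathbb{F}_{q^2}[X, Y] be a nonzero polynomial such that every monomial X^i Y^j occurring in f satisfies 0 \leq j \leq q-1 and i\,q + j\,(q-1) \leq r. Then the number of points (a, b) \in S with f(a, b) = 0 is at most r. -/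
namespace GoppaAux
open MvPolynomial Finset

/-- exponent pair -/
noncomputable def ee (i j : ℕ) : Fin 2 →₀ ℕ := Finsupp.single 0 i + Finsupp.single 1 j

@[simp] lemma ee_apply0 (i j : ℕ) : ee i j 0 = i := by simp [ee]
@[simp] lemma ee_apply1 (i j : ℕ) : ee i j 1 = j := by simp [ee]

lemma eq_ee (m : Fin 2 →₀ ℕ) : m = ee (m 0) (m 1) := by
  ext k
  fin_cases k <;> simp [ee]

/-- weight of an exponent -/
def wgt (q : ℕ) (m : Fin 2 →₀ ℕ) : ℕ := m 0 * q + m 1 * (q - 1)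

lemma wgt_add (q : ℕ) (m m' : Fin 2 →₀ ℕ) : wgt q (m + m') = wgt q m + wgt q m' := by
  simp [wgt]; ring

@[simp] lemma wgt_ee (q i j : ℕ) : wgt q (ee i j) = i * q + j * (q - 1) := by
  simp [wgt]

lemma wgt_inj {q : ℕ} (hq : 3 ≤ q) {i j i' j' : ℕ} (hj : j ≤ q - 1) (hj' : j' ≤ q - 1)
    (h : i * q + j * (q - 1) = i' * q + j' * (q - 1)) : i = i' ∧ j = j' := by
  obtain ⟨s, rfl⟩ : ∃ s, q = s + 1 := ⟨q - 1, by omega⟩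
  simp only [Nat.add_sub_cancel] at hj hj' h
  have hjj : j = j' := by
    have hc : ((i * (s+1) + j*s : ℕ) : ZMod (s+1)) = ((i' * (s+1) + j'*s : ℕ) : ZMod (s+1)) := by
      rw [h]
    have hs0 : ((s+1 : ℕ) : ZMod (s+1)) = 0 := ZMod.natCast_self _
    push_cast at hc hs0
    have hcc : (j : ZMod (s+1)) = (j' : ZMod (s+1)) := by
      have hsm : (s : ZMod (s+1)) = -1 := by linear_combination hs0
      rw [hsm] at hc
      ring_nf at hc
      linear_combination -hc
    have := (ZMod.natCast_eq_natCast_iff _ _ _).mp hcc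
    have h2 := Nat.ModEq.eq_of_lt_of_lt this (by omega) (by omega)
    exact h2
  refine ⟨?_, hjj⟩
  subst hjj
  have : i * (s+1) = i' * (s+1) := by omega
  exact Nat.eq_of_mul_eq_mul_right (by omega) this

lemma arith1 {q i j : ℕ} (h : q ≤ j) :
    (i + (q-1)) * q + (j - q) * (q-1) = i * q + j * (q-1) := by
  obtain ⟨d, rfl⟩ : ∃ d, j = d + q := ⟨j - q, by omega⟩
  simp only [Nat.add_sub_cancel]
  ring

variable {F : Type*} [Field F]

noncomputable def redM (F : Type*) [Field F] (q : ℕ) (hq : 3 ≤ q) (i j : ℕ) :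
    MvPolynomial (Fin 2) F :=
  if _h : j ≤ q - 1 then MvPolynomial.monomial (ee i j) 1
  else redM F q hq (i + (q-1)) (j - q) - redM F q hq i (j - q + 1)
  termination_by j
  decreasing_by all_goals omega

lemma monomial_ee_eq (i j : ℕ) :
    (monomial (ee i j) (1:F)) = X 0 ^ i * X 1 ^ j := by
  rw [X_pow_eq_monomial, X_pow_eq_monomial, monomial_mul, one_mul, ee]

lemma redM_eval {q : ℕ} (hq : 3 ≤ q) (a b : F) (hab : b ^ q + b = a ^ (q-1)) :
    ∀ j i, eval ![a,b] (redM F q hq i j) = a ^ i * b ^ j := by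
  intro j
  induction j using Nat.strong_induction_on with
  | _ j ih =>
    intro i
    rw [redM]
    split_ifs with h
    · simp [monomial_ee_eq]
    · rw [map_sub, ih _ (by omega), ih _ (by omega)]
      have hb : b ^ j = b ^ (j - q) * b ^ q := by rw [← pow_add]; congr 1; omega
      have hb1 : b ^ (j - q + 1) = b ^ (j - q) * b := by rw [pow_succ]
      have ha : a ^ (i + (q-1)) = a ^ i * a ^ (q-1) := pow_add a i (q-1)
      rw [ha, hb1, ← hab, hb]
      ring

lemma redM_supp {q : ℕ} (hq : 3 ≤ q) :
    ∀ j i, ∀ m ∈ (redM F q hq i j).support,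
      m 1 ≤ q - 1 ∧ wgt q m ≤ i * q + j * (q-1) := by
  intro j
  induction j using Nat.strong_induction_on with
  | _ j ih =>
    intro i m hm
    classical
    rw [redM] at hm
    split_ifs at hm with h
    · rw [support_monomial, if_neg (one_ne_zero)] at hm
      rw [Finset.mem_singleton] at hm
      subst hm
      exact ⟨by simpa using h, by simp⟩
    · have hm' := support_sub _ _ _ hm
      rw [Finset.mem_union] at hm'
      rcases hm' with hm' | hm'
      · obtain ⟨h1, h2⟩ := ih (j - q) (by omega) (i + (q-1)) m hm'
        exact ⟨h1, by rw [← arith1 (by omega : q ≤ j)]; exact h2⟩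
      · obtain ⟨h1, h2⟩ := ih (j - q + 1) (by omega) i m hm'
        refine ⟨h1, le_trans h2 ?_⟩
        have : (j - q + 1) * (q-1) ≤ j * (q-1) := Nat.mul_le_mul_right _ (by omega)
        omega

lemma redM_top {q : ℕ} (hq : 3 ≤ q) :
    ∀ j i, ∃ i₀ j₀, j₀ ≤ q - 1 ∧ i₀ * q + j₀ * (q-1) = i * q + j * (q-1) ∧
      (redM F q hq i j).coeff (ee i₀ j₀) = 1 := by
  intro j
  induction j using Nat.strong_induction_on with
  | _ j ih =>
    intro i
    rw [redM]
    split_ifs with h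
    · exact ⟨i, j, h, rfl, by simp [coeff_monomial]⟩
    · obtain ⟨i₀, j₀, hj₀, hw, hc⟩ := ih (j - q) (by omega) (i + (q-1))
      refine ⟨i₀, j₀, hj₀, by rw [hw]; exact arith1 (i := i) (j := j) (by omega), ?_⟩
      rw [coeff_sub, hc]
      have hz : (redM F q hq i (j - q + 1)).coeff (ee i₀ j₀) = 0 := by
        by_contra hz
        have hmem : ee i₀ j₀ ∈ (redM F q hq i (j - q + 1)).support := by
          rwa [mem_support_iff]
        obtain ⟨_, h2⟩ := redM_supp hq (j - q + 1) i _ hmem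
        rw [wgt_ee] at h2
        have hlt : (j - q + 1) * (q-1) < j * (q-1) :=
          Nat.mul_lt_mul_of_lt_of_le (by omega) le_rfl (by omega)
        have := arith1 (i := i) (j := j) (by omega : q ≤ j)
        omega
      rw [hz, sub_zero]


noncomputable def red (q : ℕ) (hq : 3 ≤ q) (h : MvPolynomial (Fin 2) F) :
    MvPolynomial (Fin 2) F :=
  ∑ m ∈ h.support, h.coeff m • redM F q hq (m 0) (m 1)

lemma eval_monomial_ee (a b : F) (m : Fin 2 →₀ ℕ) (c : F) :
    eval ![a,b] (monomial m c) = c * (a ^ m 0 * b ^ m 1) := by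
  have hm := eq_ee m
  rw [hm, ← mul_one c, ← C_mul_monomial, map_mul, eval_C, monomial_ee_eq]
  simp

lemma red_eval {q : ℕ} (hq : 3 ≤ q) (a b : F) (hab : b ^ q + b = a ^ (q-1))
    (h : MvPolynomial (Fin 2) F) :
    eval ![a,b] (red q hq h) = eval ![a,b] h := by
  conv_rhs => rw [← support_sum_monomial_coeff h]
  rw [red, map_sum, map_sum]
  refine Finset.sum_congr rfl fun m _ => ?_
  rw [smul_eval, redM_eval hq a b hab, eval_monomial_ee]

lemma red_supp {q : ℕ} (hq : 3 ≤ q) (h : MvPolynomial (Fin 2) F) {D : ℕ}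
    (hD : ∀ m' ∈ h.support, wgt q m' ≤ D) :
    ∀ m ∈ (red q hq h).support, m 1 ≤ q - 1 ∧ wgt q m ≤ D := by
  classical
  intro m hm
  rw [red] at hm
  obtain ⟨m', hm', hmm⟩ := Finset.mem_biUnion.mp (support_sum hm)
  have hmm' : m ∈ (redM F q hq (m' 0) (m' 1)).support :=
    Finsupp.support_smul hmm
  obtain ⟨h1, h2⟩ := redM_supp hq (m' 1) (m' 0) m hmm'
  exact ⟨h1, le_trans h2 (hD m' hm')⟩

lemma mul_monomial_supp (f : MvPolynomial (Fin 2) F) (e : Fin 2 →₀ ℕ)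
    {m' : Fin 2 →₀ ℕ} (hm' : m' ∈ (f * monomial e 1).support) :
    ∃ m'' ∈ f.support, m' = m'' + e := by
  classical
  rw [mem_support_iff, coeff_mul_monomial'] at hm'
  split_ifs at hm' with hle
  · refine ⟨m' - e, ?_, ?_⟩
    · rw [mem_support_iff]; intro hc; rw [hc] at hm'; simp at hm'
    · exact (tsub_add_cancel_of_le hle).symm
  · simp at hm'

lemma red_mul_top {q : ℕ} (hq : 3 ≤ q) (f : MvPolynomial (Fin 2) F)
    (mstar : Fin 2 →₀ ℕ) (hms : mstar ∈ f.support)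
    (hmax : ∀ m ∈ f.support, m 1 ≤ q - 1 ∧ wgt q m ≤ wgt q mstar)
    (i j : ℕ) :
    ∃ m₀, wgt q m₀ = wgt q mstar + (i * q + j * (q-1)) ∧
      (red q hq (f * monomial (ee i j) 1)).coeff m₀ ≠ 0 := by
  classical
  set e := ee i j with he
  set W := wgt q mstar + (i * q + j * (q-1)) with hW
  obtain ⟨i₀, j₀, hj₀, hw₀, hc₀⟩ := redM_top (F := F) hq ((mstar + e) 1) ((mstar + e) 0)
  have hWe : wgt q (mstar + e) = W := by rw [wgt_add, he, wgt_ee]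
  have hw₀' : wgt q (ee i₀ j₀) = W := by
    rw [wgt_ee, hw₀]; exact hWe
  refine ⟨ee i₀ j₀, hw₀', ?_⟩
  have hkey : (red q hq (f * monomial e 1)).coeff (ee i₀ j₀) = f.coeff mstar := by
    rw [red, coeff_sum]
    rw [Finset.sum_eq_single (mstar + e)]
    · rw [coeff_smul, hc₀, smul_eq_mul, mul_one, coeff_mul_monomial, mul_one]
    · intro m' hm' hne
      obtain ⟨m'', hm'', rfl⟩ := mul_monomial_supp f e hm'
      obtain ⟨hj'', hw''⟩ := hmax m'' hm''
      have hlt : wgt q (m'' + e) < W := by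
        rcases lt_or_eq_of_le hw'' with hlt | heq
        · rw [wgt_add]
          have : wgt q e = i * q + j * (q-1) := by rw [he, wgt_ee]
          omega
        · exfalso
          obtain ⟨h0, h1⟩ := wgt_inj hq hj'' (hmax mstar hms).1 heq
          apply hne
          congr 1
          rw [eq_ee m'', eq_ee mstar, h0, h1]
      have hz : (redM F q hq ((m'' + e) 0) ((m'' + e) 1)).coeff (ee i₀ j₀) = 0 := by
        by_contra hz
        have hmem : ee i₀ j₀ ∈ (redM F q hq ((m'' + e) 0) ((m'' + e) 1)).support := by
          rwa [mem_support_iff]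
        obtain ⟨_, h2⟩ := redM_supp hq ((m'' + e) 1) ((m'' + e) 0) _ hmem
        have : wgt q (m'' + e) = (m'' + e) 0 * q + (m'' + e) 1 * (q-1) := rfl
        omega
      rw [coeff_smul, hz, smul_zero]
    · intro habs
      exfalso
      apply habs
      rw [mem_support_iff, coeff_mul_monomial, mul_one]
      exact mem_support_iff.mp hms
  rw [hkey]
  exact mem_support_iff.mp hms


def BB (q N : ℕ) : Finset (ℕ × ℕ) :=
  (Finset.range (N+1) ×ˢ Finset.range q).filter fun p => p.1 * q + p.2 * (q-1) ≤ N

lemma mem_BB {q N : ℕ} (hq : 3 ≤ q) {p : ℕ × ℕ} :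
    p ∈ BB q N ↔ p.2 ≤ q - 1 ∧ p.1 * q + p.2 * (q-1) ≤ N := by
  simp only [BB, Finset.mem_filter, Finset.mem_product, Finset.mem_range]
  constructor
  · rintro ⟨⟨h1, h2⟩, h3⟩
    exact ⟨by omega, h3⟩
  · rintro ⟨h1, h2⟩
    have hp1 : p.1 ≤ p.1 * q := Nat.le_mul_of_pos_right _ (by omega)
    exact ⟨⟨by omega, by omega⟩, h2⟩

lemma BB_card {q : ℕ} (hq : 3 ≤ q) (K r : ℕ) :
    (BB q (r + K)).card ≤ (BB q K).card + r := by
  classical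
  have hsplit := Finset.card_filter_add_card_filter_not
    (s := BB q (r+K)) (p := fun p => p.1 * q + p.2 * (q-1) ≤ K)
  have h1 : (BB q (r+K)).filter (fun p => p.1 * q + p.2 * (q-1) ≤ K) ⊆ BB q K := by
    intro p hp
    rw [Finset.mem_filter] at hp
    rw [mem_BB hq]
    exact ⟨((mem_BB hq).mp hp.1).1, hp.2⟩
  have h2 : ((BB q (r+K)).filter (fun p => ¬ p.1 * q + p.2 * (q-1) ≤ K)).card ≤
      (Finset.Ioc K (r + K)).card := by
    apply Finset.card_le_card_of_injOn (fun p => p.1 * q + p.2 * (q-1))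
    · intro p hp
      rw [Finset.mem_coe, Finset.mem_filter] at hp
      rw [Finset.mem_coe, Finset.mem_Ioc]
      dsimp only
      exact ⟨by omega, ((mem_BB hq).mp hp.1).2⟩
    · intro p hp p' hp' heq
      simp only [Finset.coe_filter, Set.mem_setOf_eq] at hp hp'
      obtain ⟨h0, _⟩ := wgt_inj hq ((mem_BB hq).mp hp.1).1 ((mem_BB hq).mp hp'.1).1 heq
      obtain ⟨-, h1'⟩ := wgt_inj hq ((mem_BB hq).mp hp.1).1 ((mem_BB hq).mp hp'.1).1 heq
      exact Prod.ext h0 h1'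
  rw [Nat.card_Ioc] at h2
  have := Finset.card_le_card h1
  omega

lemma v_supp {q : ℕ} (hq : 3 ≤ q) (f : MvPolynomial (Fin 2) F)
    (mstar : Fin 2 →₀ ℕ)
    (hmax : ∀ m ∈ f.support, m 1 ≤ q - 1 ∧ wgt q m ≤ wgt q mstar) (i j : ℕ) :
    ∀ m ∈ (red q hq (f * monomial (ee i j) 1)).support,
      m 1 ≤ q - 1 ∧ wgt q m ≤ wgt q mstar + (i * q + j * (q-1)) := by
  apply red_supp
  intro m' hm'
  obtain ⟨m'', hm'', rfl⟩ := mul_monomial_supp f _ hm'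
  rw [wgt_add, wgt_ee]
  have := (hmax m'' hm'').2
  omega

lemma v_li {q : ℕ} (hq : 3 ≤ q) (f : MvPolynomial (Fin 2) F) (mstar : Fin 2 →₀ ℕ)
    (hms : mstar ∈ f.support)
    (hmax : ∀ m ∈ f.support, m 1 ≤ q - 1 ∧ wgt q m ≤ wgt q mstar) (K : ℕ) :
    LinearIndependent F (fun p : (BB q K : Finset (ℕ × ℕ)) =>
      red q hq (f * monomial (ee p.1.1 p.1.2) 1)) := by
  classical
  rw [linearIndependent_iff']
  intro s g hsum p₁ hp₁
  by_contra hg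
  obtain ⟨pst, hpst, hmaxp⟩ := Finset.exists_max_image (s.filter fun p => g p ≠ 0)
    (fun p => wgt q (ee p.1.1 p.1.2)) ⟨p₁, Finset.mem_filter.mpr ⟨hp₁, hg⟩⟩
  have hgp : g pst ≠ 0 := (Finset.mem_filter.mp hpst).2
  have hpsts : pst ∈ s := (Finset.mem_filter.mp hpst).1
  obtain ⟨m₀, hm₀w, hm₀c⟩ := red_mul_top hq f mstar hms hmax pst.1.1 pst.1.2
  have hcoeff : ∑ p ∈ s, g p * coeff m₀ (red q hq (f * monomial (ee p.1.1 p.1.2) 1)) = 0 := by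
    have := congrArg (coeff m₀) hsum
    simpa [coeff_sum, coeff_smul] using this
  rw [Finset.sum_eq_single pst] at hcoeff
  · exact hgp ((mul_eq_zero.mp hcoeff).resolve_right hm₀c)
  · intro p hps hne
    by_cases hgz : g p = 0
    · simp [hgz]
    · have hple : wgt q (ee p.1.1 p.1.2) ≤ wgt q (ee pst.1.1 pst.1.2) :=
        hmaxp p (Finset.mem_filter.mpr ⟨hps, hgz⟩)
      have hne' : wgt q (ee p.1.1 p.1.2) ≠ wgt q (ee pst.1.1 pst.1.2) := by
        intro heq
        rw [wgt_ee, wgt_ee] at heq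
        obtain ⟨h0, h1'⟩ := wgt_inj hq ((mem_BB hq).mp p.2).1 ((mem_BB hq).mp pst.2).1 heq
        exact hne (Subtype.ext (Prod.ext h0 h1'))
      have hz : coeff m₀ (red q hq (f * monomial (ee p.1.1 p.1.2) 1)) = 0 := by
        by_contra hzz
        have hmem := mem_support_iff.mpr hzz
        have hb := (v_supp hq f mstar hmax p.1.1 p.1.2 m₀ hmem).2
        rw [wgt_ee, wgt_ee] at hple hne'
        omega
      simp [hz]
  · intro habs
    exact absurd hpsts habs

lemma wgt_prod_bound {q : ℕ} {α : Type*} (s : Finset α) (g : α → MvPolynomial (Fin 2) F)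
    (D : α → ℕ) (hD : ∀ x ∈ s, ∀ m ∈ (g x).support, wgt q m ≤ D x) :
    ∀ m ∈ (∏ x ∈ s, g x).support, wgt q m ≤ ∑ x ∈ s, D x := by
  classical
  induction s using Finset.induction with
  | empty =>
    intro m hm
    simp only [Finset.prod_empty] at hm
    have : m = 0 := by
      classical
      rw [show (1 : MvPolynomial (Fin 2) F) = monomial 0 1 by rw [monomial_zero']; rfl,
        support_monomial, if_neg one_ne_zero] at hm
      simpa using hm
    simp [this, wgt]
  | insert _ _ hx ih =>
    rename_i a s'
    intro m hm
    rw [Finset.prod_insert hx] at hm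
    have hsub := support_mul _ _ hm
    rw [Finset.mem_add] at hsub
    obtain ⟨m1, hm1, m2, hm2, rfl⟩ := hsub
    rw [Finset.sum_insert hx, wgt_add]
    have h1 := hD a (Finset.mem_insert_self a s') m1 hm1
    have h2 := ih (fun x hx' => hD x (Finset.mem_insert_of_mem hx')) m2 hm2
    omega

noncomputable def evmap (Zs : Finset (F × F)) : MvPolynomial (Fin 2) F →ₗ[F] (Zs → F) where
  toFun := fun h P => eval ![(P : F × F).1, (P : F × F).2] h
  map_add' := fun x y => by funext P; simp
  map_smul' := fun c x => by funext P; simp [smul_eval]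

@[simp] lemma evmap_apply (Zs : Finset (F × F)) (h : MvPolynomial (Fin 2) F) (P : Zs) :
    evmap Zs h P = eval ![(P : F × F).1, (P : F × F).2] h := rfl

lemma lin_supp {q : ℕ} (hq : 3 ≤ q) (k : Fin 2) (c : F) :
    ∀ m ∈ (X k - C c : MvPolynomial (Fin 2) F).support, wgt q m ≤ q := by
  classical
  intro m hm
  have h := support_sub _ _ _ hm
  rw [Finset.mem_union] at h
  rcases h with h | h
  · rw [support_X, Finset.mem_singleton] at h
    subst h
    fin_cases k <;> simp [wgt, Finsupp.single_apply] <;> omega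
  · rw [show (C c : MvPolynomial (Fin 2) F) = monomial 0 c by rw [monomial_zero'],
      support_monomial] at h
    split_ifs at h with hc
    · simp at h
    · rw [Finset.mem_singleton] at h
      subst h
      simp [wgt]

end GoppaAux

set_option maxHeartbeats 1000000
set_option synthInstance.maxHeartbeats 400000

section
open MvPolynomial GoppaAux

/-- Let p be prime, q = pⁿ ≥ 3, F the field with q² elements, and
S = {(a,b) ∈ F × F : b^q + b = a^(q-1)}. If f ∈ F[X,Y] is a nonzero polynomial all
of whose monomials X^i Y^j satisfy j ≤ q-1 and i·q + j·(q-1) ≤ r, then f vanishes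
at most r points of S. -/
theorem goppa_zero_bound (p n q : ℕ) [Fact p.Prime] (hq : q = p ^ n) (h3 : 3 ≤ q)
    (F : Type*) [Field F] [Fintype F] (hF : Fintype.card F = q ^ 2)
    (r : ℕ) (f : MvPolynomial (Fin 2) F) (hf : f ≠ 0)
    (hsupp : ∀ m ∈ f.support, m 1 ≤ q - 1 ∧ m 0 * q + m 1 * (q - 1) ≤ r) :
    {ab : F × F | ab.2 ^ q + ab.2 = ab.1 ^ (q - 1) ∧
      MvPolynomial.eval ![ab.1, ab.2] f = 0}.ncard ≤ r := by
  classical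
  set Zs : Finset (F × F) := Finset.univ.filter
    (fun ab => ab.2 ^ q + ab.2 = ab.1 ^ (q-1) ∧ eval ![ab.1, ab.2] f = 0) with hZs
  have hset : {ab : F × F | ab.2 ^ q + ab.2 = ab.1 ^ (q-1) ∧ eval ![ab.1, ab.2] f = 0}
      = ↑Zs := by
    ext ab; simp [hZs]
  rw [hset, Set.ncard_coe_finset]
  set K := q * Fintype.card (F × F) with hK
  set N := r + K with hN
  -- max weight monomial of f
  have hfne : f.support.Nonempty := by
    rw [Finset.nonempty_iff_ne_empty]
    intro h
    exact hf (support_eq_empty.mp h)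
  obtain ⟨mstar, hms, hmaxw⟩ := Finset.exists_max_image f.support (wgt q) hfne
  have hmax : ∀ m ∈ f.support, m 1 ≤ q - 1 ∧ wgt q m ≤ wgt q mstar :=
    fun m hm => ⟨(hsupp m hm).1, hmaxw m hm⟩
  have hmsr : wgt q mstar ≤ r := (hsupp mstar hms).2
  set ev := evmap (F := F) Zs with hev
  set W : Submodule F (MvPolynomial (Fin 2) F) :=
    Submodule.span F (((BB q N).image (fun p => monomial (ee p.1 p.2) (1:F)))
      : Set (MvPolynomial (Fin 2) F)) with hW
  haveI hFDW : FiniteDimensional F W := by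
    rw [hW]
    infer_instance
  have hmemW : ∀ g : MvPolynomial (Fin 2) F,
      (∀ m ∈ g.support, m 1 ≤ q - 1 ∧ wgt q m ≤ N) → g ∈ W := by
    intro g hg
    rw [← support_sum_monomial_coeff g]
    refine Submodule.sum_mem _ fun m hm => ?_
    have h1 : monomial m (g.coeff m) = g.coeff m • monomial (ee (m 0) (m 1)) (1:F) := by
      rw [← eq_ee m, smul_monomial, smul_eq_mul, mul_one]
    rw [h1]
    refine Submodule.smul_mem _ _ (Submodule.subset_span ?_)
    simp only [Finset.coe_image, Set.mem_image, Finset.mem_coe]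
    refine ⟨(m 0, m 1), ?_, rfl⟩
    rw [mem_BB h3]
    exact ⟨(hg m hm).1, (hg m hm).2⟩
  have hcurve : ∀ P : Zs, (P : F × F).2 ^ q + (P : F × F).2 = (P : F × F).1 ^ (q-1) := by
    intro P
    have := P.2
    simp only [hZs, Finset.mem_filter] at this
    exact this.2.1
  have hfzero : ∀ P : Zs, eval ![(P : F×F).1, (P : F×F).2] f = 0 := by
    intro P
    have := P.2
    simp only [hZs, Finset.mem_filter] at this
    exact this.2.2
  set v : ℕ × ℕ → MvPolynomial (Fin 2) F :=
    fun pr => red q h3 (f * monomial (ee pr.1 pr.2) 1) with hv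
  have hvW : ∀ pr ∈ BB q K, v pr ∈ W := by
    intro pr hpr
    apply hmemW
    intro m hm
    have h1 := v_supp h3 f mstar hmax pr.1 pr.2 m hm
    refine ⟨h1.1, le_trans h1.2 ?_⟩
    have h2 := ((mem_BB h3).mp hpr).2
    omega
  have hvker : ∀ pr, ev (v pr) = 0 := by
    intro pr
    funext P
    rw [hev, evmap_apply, hv]
    show eval _ (red q h3 _) = _
    rw [red_eval h3 _ _ (hcurve P), map_mul, hfzero P, zero_mul]
    simp
  set e' := ev.domRestrict W with he'
  have hrank := LinearMap.finrank_range_add_finrank_ker e'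
  -- interpolation: range e' = ⊤
  have hurange : ∀ P₀ : Zs, ∃ u : Zs → F,
      u ∈ LinearMap.range e' ∧ u P₀ ≠ 0 ∧ ∀ P', P' ≠ P₀ → u P' = 0 := by
    intro P₀
    set a := (P₀ : F × F).1 with ha
    set b := (P₀ : F × F).2 with hb
    set lin : F × F → MvPolynomial (Fin 2) F := fun P' =>
      if P'.1 = a then (X 1 - C P'.2) else (X 0 - C P'.1) with hlin
    set hpoly : MvPolynomial (Fin 2) F := ∏ P' ∈ Zs.erase (P₀ : F × F), lin P' with hhp
    set w : MvPolynomial (Fin 2) F := red q h3 hpoly with hw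
    have hwW : w ∈ W := by
      apply hmemW
      apply red_supp
      intro m' hm'
      have hb1 := wgt_prod_bound (q := q) (Zs.erase (P₀ : F × F)) lin (fun _ => q)
        (fun x _ => by
          rw [hlin]
          dsimp only
          split_ifs
          · exact lin_supp h3 1 _
          · exact lin_supp h3 0 _) m' hm'
      rw [Finset.sum_const, smul_eq_mul] at hb1
      have hcard : (Zs.erase (P₀ : F × F)).card ≤ Fintype.card (F × F) :=
        le_trans (Finset.card_le_card (Finset.erase_subset _ _)) (Finset.card_le_univ Zs)
      have : (Zs.erase (P₀ : F × F)).card * q ≤ K := by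
        rw [hK, mul_comm]
        exact Nat.mul_le_mul_left q hcard
      omega
    -- evaluation of w on points of Zs equals evaluation of hpoly
    have hweval : ∀ P : Zs, eval ![(P : F×F).1, (P : F×F).2] w
        = ∏ P' ∈ Zs.erase (P₀ : F × F), eval ![(P : F×F).1, (P : F×F).2] (lin P') := by
      intro P
      rw [hw]
      rw [red_eval h3 _ _ (hcurve P), hhp, map_prod]
    refine ⟨ev w, ⟨⟨w, hwW⟩, rfl⟩, ?_, ?_⟩
    · rw [hev, evmap_apply, hweval P₀]
      rw [Finset.prod_ne_zero_iff]
      intro P' hP'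
      rw [hlin]
      dsimp only
      have hPne : P' ≠ (P₀ : F × F) := Finset.ne_of_mem_erase hP'
      split_ifs with hxx
      · simp only [map_sub, eval_X, eval_C]
        simp only [Matrix.cons_val_one, Matrix.head_cons]
        intro hcc
        apply hPne
        have : P'.2 = b := by
          have := sub_eq_zero.mp hcc
          rw [← this]
          rfl
        exact Prod.ext hxx this
      · simp only [map_sub, eval_X, eval_C]
        simp only [Matrix.cons_val_zero]
        intro hcc
        exact hxx (sub_eq_zero.mp hcc).symm
    · intro P' hne
      rw [hev, evmap_apply, hweval P']
      apply Finset.prod_eq_zero (i := (P' : F × F))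
      · rw [Finset.mem_erase]
        exact ⟨fun h => hne (Subtype.ext h), P'.2⟩
      · rw [hlin]
        dsimp only
        split_ifs with hxx
        · simp
        · simp
  have hrange_top : LinearMap.range e' = ⊤ := by
    rw [eq_top_iff]
    intro φ _
    choose u hu1 hu2 hu3 using hurange
    have hφ : φ = ∑ P ∈ Finset.univ, (φ P * (u P P)⁻¹) • u P := by
      funext P'
      rw [Finset.sum_apply]
      rw [Finset.sum_eq_single P']
      · rw [Pi.smul_apply, smul_eq_mul, mul_assoc, inv_mul_cancel₀ (hu2 P'), mul_one]
      · intro P _ hne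
        rw [Pi.smul_apply, hu3 P P' (fun h => hne h.symm), smul_zero]
      · intro h
        exact absurd (Finset.mem_univ P') h
    rw [hφ]
    exact Submodule.sum_mem _ fun P _ => Submodule.smul_mem _ _ (hu1 P)
  have hranget : Module.finrank F (LinearMap.range e') = Zs.card := by
    rw [hrange_top, finrank_top, Module.finrank_fintype_fun_eq_card, Fintype.card_coe]
  -- kernel dimension
  have hli := v_li h3 f mstar hms hmax K
  set U : Submodule F (MvPolynomial (Fin 2) F) :=
    Submodule.span F (Set.range (fun pr : {pr : ℕ × ℕ // pr ∈ BB q K} => v pr.1)) with hU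
  haveI hFDU : FiniteDimensional F U := by
    rw [hU]
    exact FiniteDimensional.span_of_finite F (Set.finite_range _)
  have hUrank : (BB q K).card ≤ Module.finrank F U := by
    have h1 : Module.finrank F U = Fintype.card {pr : ℕ × ℕ // pr ∈ BB q K} := by
      rw [hU]
      exact finrank_span_eq_card hli
    rw [h1, Fintype.card_coe]
  have hUleW : U ≤ W := by
    rw [hU, Submodule.span_le]
    rintro x ⟨pr, rfl⟩
    exact hvW pr.1 pr.2
  have hUker : U ≤ LinearMap.ker ev := by
    rw [hU, Submodule.span_le]
    rintro x ⟨pr, rfl⟩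
    rw [SetLike.mem_coe, LinearMap.mem_ker]
    exact hvker pr.1
  haveI hFDK : FiniteDimensional F (LinearMap.ker e') := inferInstance
  have hcardk : (BB q K).card ≤ Module.finrank F (LinearMap.ker e') := by
    refine le_trans hUrank ?_
    have hcle : Submodule.comap W.subtype U ≤ LinearMap.ker e' := by
      intro x hx
      rw [Submodule.mem_comap] at hx
      rw [LinearMap.mem_ker]
      show ev x.1 = 0
      exact LinearMap.mem_ker.mp (hUker hx)
    calc Module.finrank F U
        = Module.finrank F (Submodule.comap W.subtype U) :=
          (LinearEquiv.finrank_eq (Submodule.comapSubtypeEquivOfLe hUleW)).symm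
      _ ≤ Module.finrank F (LinearMap.ker e') := Submodule.finrank_mono hcle
  have hWrank : Module.finrank F W ≤ (BB q N).card :=
    le_trans (finrank_span_finset_le_card _) Finset.card_image_le
  have hBB := BB_card h3 K r
  rw [← hN] at hBB
  omega

end
end

section
/- Let p be a prime, q = p^n \geq 3 a power of p, \mathbb{F}_{q^2} the field with q^2 elements, and S = \{ (a,b) \in \mathbb{F}_{q^2} \times \mathbb{F}_{q^2} : b^q + b = a^{q-1} \}. Let r be a natural number with r < \#S. Then the family of evaluation vectors v_{i,j} \in \mathbb{F}_{q^2}^{S}, defined by (v_{i,j})_{(a,b)} = a^i b^j, indexed by the pairs (i,j) \in \mathbb{N}^2 with 0 \leq j \leq q-1 and i\,q + j\,(q-1) \leq r, is linearly independent over \mathbb{F}_{q^2}. -/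
open Polynomial Finset

/-- Auxiliary: a set of roots of a nonzero polynomial has cardinality ≤ natDegree. -/
lemma card_filter_eval_le {F : Type*} [Field F] [Fintype F] [DecidableEq F]
    (P : F[X]) (hP : P ≠ 0) (pr : F → Prop) [DecidablePred pr]
    (h : ∀ z, pr z → P.eval z = 0) :
    (Finset.univ.filter pr).card ≤ P.natDegree := by
  calc (Finset.univ.filter pr).card ≤ P.roots.toFinset.card := by
        apply Finset.card_le_card
        intro z hz
        simp only [Finset.mem_filter, Finset.mem_univ, true_and] at hz
        simpa [Multiset.mem_toFinset, Polynomial.mem_roots hP] using h z hz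
    _ ≤ Multiset.card P.roots := Multiset.toFinset_card_le _
    _ ≤ P.natDegree := P.card_roots'

lemma natDeg_pow_add_linear {F : Type*} [Field F] (q : ℕ) (hq : 2 ≤ q) (c' c : F) :
    ((X : F[X]) ^ q + (C c' * X + C c)).natDegree = q := by
  rw [Polynomial.natDegree_add_eq_left_of_natDegree_lt, Polynomial.natDegree_X_pow]
  rw [Polynomial.natDegree_X_pow]
  exact lt_of_le_of_lt (Polynomial.natDegree_linear_le) (by omega)

lemma pow_add_linear_ne_zero {F : Type*} [Field F] (q : ℕ) (hq : 2 ≤ q) (c' c : F) :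
    ((X : F[X]) ^ q + (C c' * X + C c)) ≠ 0 := by
  intro h
  have := natDeg_pow_add_linear q hq c' c
  rw [h, Polynomial.natDegree_zero] at this
  omega

/-- Let p be prime, q = pⁿ ≥ 3, F the field with q² elements, and
S = {(a,b) ∈ F × F : b^q + b = a^(q-1)}. For r < #S, the evaluation vectors
v_{i,j} ∈ F^S, (v_{i,j})_{(a,b)} = aⁱbʲ, indexed by pairs (i,j) with j ≤ q-1 and
i·q + j·(q-1) ≤ r, are linearly independent over F. -/
theorem evaluation_vectors_linearIndependent (p n q : ℕ) [Fact p.Prime]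
    (hq : q = p ^ n) (h3 : 3 ≤ q)
    (F : Type*) [Field F] [Fintype F] (hF : Fintype.card F = q ^ 2)
    (r : ℕ) (hr : r < {ab : F × F | ab.2 ^ q + ab.2 = ab.1 ^ (q - 1)}.ncard) :
    LinearIndependent F
      (fun ij : {ij : ℕ × ℕ // ij.2 ≤ q - 1 ∧ ij.1 * q + ij.2 * (q - 1) ≤ r} =>
        (fun s : {ab : F × F | ab.2 ^ q + ab.2 = ab.1 ^ (q - 1)} =>
          s.1.1 ^ ij.1.1 * s.1.2 ^ ij.1.2 : _ → F)) := by
  classical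
  have hq2 : 2 ≤ q := by omega
  have hq0 : 0 < q := by omega
  -- characteristic of F is p
  have hn : n ≠ 0 := by rintro rfl; rw [pow_zero] at hq; omega
  haveI : CharP F (ringChar F) := ringChar.charP F
  obtain ⟨k, hkp, hcard⟩ := FiniteField.card F (ringChar F)
  have hp_eq : ringChar F = p := by
    have h1 : p ∣ ringChar F ^ (k : ℕ) := by
      rw [← hcard, hF, hq, ← pow_mul]
      exact dvd_pow_self p (by positivity)
    have h2 : p ∣ ringChar F := (Nat.Prime.dvd_of_dvd_pow (Fact.out)) h1
    exact ((Nat.prime_dvd_prime_iff_eq (Fact.out) hkp).mp h2).symm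
  haveI : CharP F p := hp_eq ▸ ringChar.charP F
  -- Frobenius facts
  have hadd : ∀ x y : F, (x + y) ^ q = x ^ q + y ^ q := by
    intro x y; rw [hq]; exact add_pow_char_pow x y p n
  have hsub : ∀ x y : F, (x - y) ^ q = x ^ q - y ^ q := by
    intro x y; rw [hq]; exact sub_pow_char_pow x y n
  have hq2pow : ∀ x : F, x ^ q ^ 2 = x := by
    intro x; rw [← hF]; exact FiniteField.pow_card x
  -- the subgroup of "trace"-zero elements
  set Zf : Finset F := Finset.univ.filter (fun z : F => z ^ q + z = 0) with hZf
  set Kf : Finset F := Finset.univ.filter (fun c : F => c ^ q = c) with hKf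
  have hZle : Zf.card ≤ q := by
    have := card_filter_eval_le ((X : F[X]) ^ q + (C 1 * X + C 0))
      (pow_add_linear_ne_zero q hq2 1 0) (fun z : F => z ^ q + z = 0)
      (fun z hz => by simpa using hz)
    rwa [natDeg_pow_add_linear q hq2 1 0] at this
  have hKle : Kf.card ≤ q := by
    have := card_filter_eval_le ((X : F[X]) ^ q + (C (-1) * X + C 0))
      (pow_add_linear_ne_zero q hq2 (-1) 0) (fun c : F => c ^ q = c)
      (fun z hz => by
        simp only [eval_add, eval_pow, eval_X, eval_mul, eval_C, eval_neg]
        rw [hz]; ring)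
    rwa [natDeg_pow_add_linear q hq2 (-1) 0] at this
  -- fibers of z ↦ z^q + z are translates of Zf
  have hfib : ∀ c : F, ∀ b0 : F, b0 ^ q + b0 = c →
      (Finset.univ.filter (fun b : F => b ^ q + b = c)).card = Zf.card := by
    intro c b0 hb0
    have himg : Finset.univ.filter (fun b : F => b ^ q + b = c) = Zf.image (· + b0) := by
      ext b
      simp only [Finset.mem_filter, Finset.mem_univ, true_and, Finset.mem_image, hZf]
      constructor
      · intro hb
        refine ⟨b - b0, ?_, by ring⟩
        rw [hsub b b0]
        rw [← hb0] at hb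
        linear_combination hb
      · rintro ⟨z, hz, rfl⟩
        rw [hadd z b0]
        linear_combination hz + hb0
    rw [himg, Finset.card_image_of_injective _ (add_left_injective b0)]
  -- counting: Zf.card = q
  have hmap : ∀ z : F, (z ^ q + z) ∈ Kf := by
    intro z
    simp only [hKf, Finset.mem_filter, Finset.mem_univ, true_and]
    rw [hadd, ← pow_mul, ← pow_two, hq2pow, add_comm]
  have hcount : q ^ 2 = ∑ c ∈ Kf, (Finset.univ.filter (fun z : F => z ^ q + z = c)).card := by
    rw [← hF, ← Finset.card_univ]
    exact Finset.card_eq_sum_card_fiberwise (fun z _ => hmap z)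
  have hZq : Zf.card = q := by
    refine le_antisymm hZle ?_
    have hle : q ^ 2 ≤ Kf.card * Zf.card := by
      rw [hcount]
      calc ∑ c ∈ Kf, (Finset.univ.filter (fun z : F => z ^ q + z = c)).card
          ≤ ∑ _c ∈ Kf, Zf.card := by
            refine Finset.sum_le_sum (fun c _ => ?_)
            rcases Finset.eq_empty_or_nonempty
              (Finset.univ.filter (fun z : F => z ^ q + z = c)) with he | ⟨b0, hb0⟩
            · simp [he]
            · simp only [Finset.mem_filter, Finset.mem_univ, true_and] at hb0
              exact le_of_eq (hfib c b0 hb0)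
        _ = Kf.card * Zf.card := by rw [Finset.sum_const, smul_eq_mul]
    have hqq : q * q ≤ q * Zf.card := by
      calc q * q = q ^ 2 := (sq q).symm
        _ ≤ Kf.card * Zf.card := hle
        _ ≤ q * Zf.card := Nat.mul_le_mul_right _ hKle
    exact Nat.le_of_mul_le_mul_left hqq hq0
  -- the finset S and its projection
  set Sf : Finset (F × F) :=
    Finset.univ.filter (fun ab : F × F => ab.2 ^ q + ab.2 = ab.1 ^ (q - 1)) with hSf
  have hrS : r < Sf.card := by
    have hset : {ab : F × F | ab.2 ^ q + ab.2 = ab.1 ^ (q - 1)} = ↑Sf := by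
      ext ab; simp [hSf]
    rwa [hset, Set.ncard_coe_finset] at hr
  set Af : Finset F := Sf.image Prod.fst with hAf
  have hfiberA : ∀ a ∈ Af,
      (Finset.univ.filter (fun b : F => b ^ q + b = a ^ (q - 1))).card = q := by
    intro a ha
    obtain ⟨ab, hab, rfl⟩ := Finset.mem_image.mp ha
    simp only [hSf, Finset.mem_filter, Finset.mem_univ, true_and] at hab
    rw [hfib _ ab.2 hab, hZq]
  have hScard : Sf.card = Af.card * q := by
    rw [Finset.card_eq_sum_card_fiberwise
      (f := Prod.fst) (t := Af) (fun ab hab => Finset.mem_image_of_mem _ hab)]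
    rw [Finset.sum_congr rfl (fun a ha => ?_), Finset.sum_const, smul_eq_mul]
    have himg : Sf.filter (fun ab => ab.1 = a)
        = (Finset.univ.filter (fun b : F => b ^ q + b = a ^ (q - 1))).image
            (fun b => (a, b)) := by
      ext ab
      simp only [hSf, Finset.mem_filter, Finset.mem_univ, true_and, Finset.mem_image]
      constructor
      · rintro ⟨h1, rfl⟩
        exact ⟨ab.2, h1, rfl⟩
      · rintro ⟨b, hb, rfl⟩
        exact ⟨hb, rfl⟩
    rw [himg, Finset.card_image_of_injective _ (fun b b' h => by simpa using h),
      hfiberA a ha]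
  set N : ℕ := Af.card with hN
  have hrN : r < N * q := by rw [hN, ← hScard]; exact hrS
  have hNpos : 0 < N := by
    rcases Nat.eq_zero_or_pos N with h0 | h
    · exfalso; rw [h0, Nat.zero_mul] at hrN; omega
    · exact h
  -- linear independence
  rw [linearIndependent_iff']
  intro s g hsum ij hij
  set c : ℕ → ℕ → F := fun i j => ∑ x ∈ s.filter (fun x => x.1 = (i, j)), g x with hc
  have hcval : ∀ x ∈ s, c x.1.1 x.1.2 = g x := by
    intro x hx
    have hfx : s.filter (fun y => y.1 = ((x.1.1 : ℕ), (x.1.2 : ℕ))) = {x} := by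
      ext y
      simp only [Finset.mem_filter, Finset.mem_singleton]
      constructor
      · rintro ⟨hy, h1⟩
        exact Subtype.ext (by simpa using h1)
      · rintro rfl
        exact ⟨hx, rfl⟩
    rw [hc]
    simp only [hfx, Finset.sum_singleton]
  have hcsupp : ∀ i j, c i j ≠ 0 → j ≤ q - 1 ∧ i * q + j * (q - 1) ≤ r := by
    intro i j hcij
    by_contra hcon
    apply hcij
    rw [hc]
    apply Finset.sum_eq_zero
    intro x hx
    exfalso
    simp only [Finset.mem_filter] at hx
    have h2 := x.2
    rw [hx.2] at h2
    exact hcon h2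
  have hiq : ∀ (i : ℕ), i * q ≤ r → i < N := by
    intro i hi
    have : i * q < N * q := lt_of_le_of_lt hi hrN
    exact Nat.lt_of_mul_lt_mul_right this
  have hibound : ∀ i j, c i j ≠ 0 → i < N ∧ j < q := by
    intro i j hcij
    obtain ⟨hj, hle⟩ := hcsupp i j hcij
    exact ⟨hiq i (by omega), by omega⟩
  -- the evaluation identity at a point of S
  have hpoint : ∀ a b : F, b ^ q + b = a ^ (q - 1) →
      ∑ jj ∈ Finset.range q, (∑ ii ∈ Finset.range N, c ii jj * a ^ ii) * b ^ jj = 0 := by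
    intro a b hab
    have heval : ∑ x ∈ s, g x * (a ^ x.1.1 * b ^ x.1.2) = 0 := by
      have h := congrFun hsum ⟨(a, b), hab⟩
      simpa [Finset.sum_apply] using h
    have hmaps : ∀ x ∈ s, (x : {ij : ℕ × ℕ //
        ij.2 ≤ q - 1 ∧ ij.1 * q + ij.2 * (q - 1) ≤ r}).1
          ∈ Finset.range N ×ˢ Finset.range q := by
      intro x _
      obtain ⟨hj, hle⟩ := x.2
      simp only [Finset.mem_product, Finset.mem_range]
      exact ⟨hiq x.1.1 (by omega), by omega⟩
    have hfibsum : ∑ ij' ∈ Finset.range N ×ˢ Finset.range q,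
        c ij'.1 ij'.2 * (a ^ ij'.1 * b ^ ij'.2)
          = ∑ x ∈ s, g x * (a ^ x.1.1 * b ^ x.1.2) := by
      rw [← Finset.sum_fiberwise_of_maps_to hmaps
        (fun x => g x * (a ^ x.1.1 * b ^ x.1.2))]
      refine Finset.sum_congr rfl (fun ij' _ => ?_)
      rw [hc, Finset.sum_mul]
      refine Finset.sum_congr rfl (fun x hx => ?_)
      simp only [Finset.mem_filter] at hx
      rw [hx.2]
    have hswap : ∑ ij' ∈ Finset.range N ×ˢ Finset.range q,
        c ij'.1 ij'.2 * (a ^ ij'.1 * b ^ ij'.2)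
          = ∑ jj ∈ Finset.range q, (∑ ii ∈ Finset.range N, c ii jj * a ^ ii) * b ^ jj := by
      rw [Finset.sum_product]
      rw [Finset.sum_comm]
      refine Finset.sum_congr rfl (fun jj _ => ?_)
      rw [Finset.sum_mul]
      exact Finset.sum_congr rfl (fun ii _ => by ring)
    rw [← hswap, hfibsum]
    exact heval
  -- the coefficient polynomials
  set Fd : ℕ → F[X] := fun j => ∑ i ∈ Finset.range N, C (c i j) * X ^ i with hFd
  have hFdeval : ∀ (j : ℕ) (a : F),
      (Fd j).eval a = ∑ i ∈ Finset.range N, c i j * a ^ i := by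
    intro j a
    simp [hFd, Polynomial.eval_finset_sum]
  have hFdcoeff : ∀ (j i : ℕ), i < N → (Fd j).coeff i = c i j := by
    intro j i hi
    rw [hFd]
    simp only [Polynomial.finset_sum_coeff, Polynomial.coeff_C_mul, Polynomial.coeff_X_pow,
      mul_ite, mul_one, mul_zero]
    rw [Finset.sum_ite_eq (Finset.range N) i (fun i' => c i' j)]
    simp [hi]
  have hFzero : ∀ j, j < q → Fd j = 0 := by
    intro j hjq
    apply Polynomial.eq_zero_of_natDegree_lt_card_of_eval_eq_zero' (Fd j) Af
    · intro a ha
      set Ga : F[X] := ∑ j' ∈ Finset.range q, C ((Fd j').eval a) * X ^ j' with hGa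
      have hGzero : Ga = 0 := by
        apply Polynomial.eq_zero_of_natDegree_lt_card_of_eval_eq_zero' Ga
          (Finset.univ.filter (fun b : F => b ^ q + b = a ^ (q - 1)))
        · intro b hb
          simp only [Finset.mem_filter, Finset.mem_univ, true_and] at hb
          rw [hGa]
          rw [Polynomial.eval_finset_sum]
          simp only [Polynomial.eval_mul, Polynomial.eval_C, Polynomial.eval_pow,
            Polynomial.eval_X]
          have h := hpoint a b hb
          calc ∑ j' ∈ Finset.range q, (Fd j').eval a * b ^ j'
              = ∑ j' ∈ Finset.range q,
                  (∑ ii ∈ Finset.range N, c ii j' * a ^ ii) * b ^ j' := by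
                refine Finset.sum_congr rfl (fun j' _ => ?_)
                rw [hFdeval]
            _ = 0 := h
        · rw [hfiberA a ha]
          refine lt_of_le_of_lt
            (Polynomial.natDegree_sum_le_of_forall_le _ _ (fun j' hj' => ?_)) (?_ : q - 1 < q)
          · refine le_trans (Polynomial.natDegree_C_mul_X_pow_le _ _) ?_
            simp only [Finset.mem_range] at hj'
            omega
          · omega
      have hcoe := congrArg (fun P => Polynomial.coeff P j) hGzero
      simp only [hGa, Polynomial.finset_sum_coeff, Polynomial.coeff_C_mul,
        Polynomial.coeff_X_pow, mul_ite, mul_one, mul_zero, Polynomial.coeff_zero] at hcoe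
      rw [Finset.sum_ite_eq (Finset.range q) j (fun j' => (Fd j').eval a)] at hcoe
      simpa [hjq] using hcoe
    · rw [← hN]
      refine lt_of_le_of_lt
        (Polynomial.natDegree_sum_le_of_forall_le _ _ (fun i hi => ?_)) (?_ : N - 1 < N)
      · refine le_trans (Polynomial.natDegree_C_mul_X_pow_le _ _) ?_
        simp only [Finset.mem_range] at hi
        omega
      · omega
  have hcz : ∀ i j, c i j = 0 := by
    intro i j
    by_contra h0
    obtain ⟨hi, hj⟩ := hibound i j h0
    have hz := hFzero j hj
    have := hFdcoeff j i hi
    rw [hz, Polynomial.coeff_zero] at this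
    exact h0 this.symm
  rw [← hcval ij hij]
  exact hcz _ _
end

section
/- Let p be a prime, q = p^n \geq 3 a power of p, \mathbb{F}_{q^2} the field with q^2 elements, and S = \{ (a,b) \in \mathbb{F}_{q^2} \times \mathbb{F}_{q^2} : b^q + b = a^{q-1} \}. Let r be a natural number with r < \#S, and let C_r \subseteq \mathbb{F}_{q^2}^{S} be the \mathbb{F}_{q^2}-linear span of the evaluation vectors v_{i,j} ((v_{i,j})_{(a,b)} = a^i b^j) over all (i,j) \in \mathbb{N}^2 with 0 \leq j \leq q-1 and i\,q + j\,(q-1) \leq r. Then \dim_{\mathbb{F}_{q^2}} C_r = \#\{ (i,j) \in \mathbb{N}^2 : 0 \leq j \leq q-1, \; iq + j(q-1) \leq r \}. -/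
open Polynomial Finset

lemma aux_charP (p n q : ℕ) [Fact p.Prime] (hq : q = p ^ n) (h3 : 3 ≤ q)
    (F : Type*) [Field F] [Fintype F] (hF : Fintype.card F = q ^ 2) : CharP F p := by
  haveI : CharP F (ringChar F) := ringChar.charP F
  have hprime : (ringChar F).Prime := CharP.char_is_prime F (ringChar F)
  have h0 : ((q ^ 2 : ℕ) : F) = 0 := by rw [← hF]; exact FiniteField.cast_card_eq_zero F
  have hdvd : ringChar F ∣ q ^ 2 := (CharP.cast_eq_zero_iff F (ringChar F) _).mp h0
  have hdvd2 : ringChar F ∣ p ^ (n * 2) := by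
    rwa [hq, ← pow_mul] at hdvd
  have hdp : ringChar F ∣ p := hprime.dvd_of_dvd_pow hdvd2
  have : ringChar F = p := (Nat.prime_dvd_prime_iff_eq hprime Fact.out).mp hdp
  exact this ▸ ‹CharP F (ringChar F)›

lemma aux_roots (p n q : ℕ) [Fact p.Prime] (hq : q = p ^ n) (h3 : 3 ≤ q)
    (F : Type*) [Field F] [Fintype F] (hF : Fintype.card F = q ^ 2) :
    (X ^ q + X : F[X]).roots.card = q ∧ (X ^ q + X : F[X]).roots.Nodup := by
  haveI : CharP F p := aux_charP p n q hq h3 F hF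
  set f : F[X] := X ^ q + X with hf
  set g : F[X] := f ^ (q - 1) - 1 with hg
  have hfrob : ∀ x y : F[X], (x + y) ^ q = x ^ q + y ^ q := by
    intro x y; rw [hq]; exact add_pow_char_pow _ _ _ _
  have h1 : f * f ^ (q - 1) = f ^ q := by
    rw [← pow_succ']
    congr 1
    omega
  have h2 : f ^ q = X ^ (q * q) + X ^ q := by
    rw [hf, hfrob, ← pow_mul]
  have hbig : f * g = X ^ (q ^ 2) - X := by
    rw [hg, mul_sub, mul_one, h1, h2, hf, pow_two]
    ring
  have hroots_big : (X ^ (q ^ 2) - X : F[X]).roots = (Finset.univ : Finset F).val := by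
    rw [← hF]; exact FiniteField.roots_X_pow_card_sub_X F
  have hne : (X ^ (q ^ 2) - X : F[X]) ≠ 0 := by
    refine FiniteField.X_pow_card_sub_X_ne_zero F ?_
    have : 1 < q := by omega
    exact Nat.one_lt_pow (by norm_num) this
  have hfg_ne : f * g ≠ 0 := by rw [hbig]; exact hne
  have hsum : f.roots + g.roots = (Finset.univ : Finset F).val := by
    rw [← Polynomial.roots_mul hfg_ne, hbig, hroots_big]
  have hcards : Multiset.card f.roots + Multiset.card g.roots = q * q := by
    have := congrArg Multiset.card hsum
    rw [Multiset.card_add] at this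
    rw [this]
    have : Multiset.card (Finset.univ : Finset F).val = Fintype.card F := rfl
    rw [this, hF, pow_two]
  have hfdeg : f.natDegree ≤ q := by
    refine le_trans (natDegree_add_le _ _) ?_
    simp [natDegree_X_pow]
    omega
  have hgdeg : g.natDegree ≤ (q - 1) * q := by
    rw [hg]
    refine le_trans (natDegree_sub_le _ _) ?_
    simp only [natDegree_one, max_eq_left (Nat.zero_le _)]
    refine le_trans (natDegree_pow_le) ?_
    exact Nat.mul_le_mul_left _ hfdeg
  have hcf : Multiset.card f.roots ≤ q := le_trans (card_roots' f) hfdeg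
  have hcg : Multiset.card g.roots ≤ (q - 1) * q := le_trans (card_roots' g) hgdeg
  have hsubm : (q - 1) * q = q * q - q := by
    rw [Nat.sub_mul, one_mul]
  have hqle : q ≤ q * q := Nat.le_mul_of_pos_left q (by omega)
  have hcardf : Multiset.card f.roots = q := by omega
  have hnodup : f.roots.Nodup := by
    have hle : f.roots ≤ (Finset.univ : Finset F).val := by
      rw [← hsum]; exact Multiset.le_add_right _ _
    exact Multiset.nodup_of_le hle (Finset.univ).nodup
  exact ⟨hcardf, hnodup⟩

lemma aux_fiber (p n q : ℕ) [Fact p.Prime] (hq : q = p ^ n) (h3 : 3 ≤ q)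
    (F : Type*) [Field F] [Fintype F] (hF : Fintype.card F = q ^ 2)
    (a b₀ : F) (hb₀ : b₀ ^ q + b₀ = a ^ (q - 1))
    [DecidablePred fun b : F => b ^ q + b = a ^ (q - 1)] :
    (Finset.univ.filter (fun b : F => b ^ q + b = a ^ (q - 1))).card = q := by
  classical
  haveI : CharP F p := aux_charP p n q hq h3 F hF
  obtain ⟨hcard, hnodup⟩ := aux_roots p n q hq h3 F hF
  have hfne : (X ^ q + X : F[X]) ≠ 0 := by
    intro h
    rw [h] at hcard
    simp at hcard
    omega
  have hmem : ∀ x : F, x ∈ (X ^ q + X : F[X]).roots.toFinset ↔ x ^ q + x = 0 := by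
    intro x
    rw [Multiset.mem_toFinset, mem_roots hfne]
    simp [IsRoot]
  have himg : Finset.univ.filter (fun b : F => b ^ q + b = a ^ (q - 1))
      = (X ^ q + X : F[X]).roots.toFinset.image (fun k => k + b₀) := by
    ext x
    simp only [mem_filter, mem_univ, true_and, mem_image]
    constructor
    · intro hx
      refine ⟨x - b₀, ?_, by ring⟩
      rw [hmem]
      have hp : (x - b₀) ^ q = x ^ q - b₀ ^ q := by
        rw [hq]; exact sub_pow_char_pow _ _ _
      rw [hp]
      linear_combination hx - hb₀
    · rintro ⟨k, hk, rfl⟩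
      rw [hmem] at hk
      have hp : (k + b₀) ^ q = k ^ q + b₀ ^ q := by
        rw [hq]; exact add_pow_char_pow _ _ _ _
      rw [hp]
      linear_combination hk + hb₀
  rw [himg, Finset.card_image_of_injective _ (add_left_injective b₀),
    Multiset.toFinset_card_of_nodup hnodup, hcard]


/-- Let p be prime, q = pⁿ ≥ 3, F the field with q² elements, and
S = {(a,b) ∈ F × F : b^q + b = a^(q-1)}. For r < #S, the span C_r of the evaluation
vectors v_{i,j} ((v_{i,j})_{(a,b)} = aⁱbʲ) over pairs (i,j) with j ≤ q-1 and
i·q + j·(q-1) ≤ r has dimension #{(i,j) : j ≤ q-1, i·q + j·(q-1) ≤ r}. -/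
theorem code_dimension_eq_T (p n q : ℕ) [Fact p.Prime]
    (hq : q = p ^ n) (h3 : 3 ≤ q)
    (F : Type*) [Field F] [Fintype F] (hF : Fintype.card F = q ^ 2)
    (r : ℕ) (hr : r < {ab : F × F | ab.2 ^ q + ab.2 = ab.1 ^ (q - 1)}.ncard) :
    Module.finrank F
      (Submodule.span F (Set.range
        (fun ij : {ij : ℕ × ℕ // ij.2 ≤ q - 1 ∧ ij.1 * q + ij.2 * (q - 1) ≤ r} =>
          (fun s : {ab : F × F | ab.2 ^ q + ab.2 = ab.1 ^ (q - 1)} =>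
            s.1.1 ^ ij.1.1 * s.1.2 ^ ij.1.2 : _ → F))))
      = {ij : ℕ × ℕ | ij.2 ≤ q - 1 ∧ ij.1 * q + ij.2 * (q - 1) ≤ r}.ncard := by
  classical
  have hfin : {ij : ℕ × ℕ | ij.2 ≤ q - 1 ∧ ij.1 * q + ij.2 * (q - 1) ≤ r}.Finite := by
    refine (Set.finite_Iic ((r, q - 1) : ℕ × ℕ)).subset ?_
    rintro ⟨i, j⟩ ⟨hj, hle⟩
    have hle' : i * q + j * (q - 1) ≤ r := hle
    have hi : i ≤ r := by
      have h1 : i * 1 ≤ i * q := Nat.mul_le_mul_left i (by omega)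
      omega
    exact ⟨by simpa using hi, by simpa using hj⟩
  haveI instI : Fintype ↥{ij : ℕ × ℕ | ij.2 ≤ q - 1 ∧ ij.1 * q + ij.2 * (q - 1) ≤ r} :=
    hfin.fintype
  haveI : Fintype {ij : ℕ × ℕ // ij.2 ≤ q - 1 ∧ ij.1 * q + ij.2 * (q - 1) ≤ r} := instI
  have li : LinearIndependent F
      (fun ij : {ij : ℕ × ℕ // ij.2 ≤ q - 1 ∧ ij.1 * q + ij.2 * (q - 1) ≤ r} =>
          (fun s : {ab : F × F | ab.2 ^ q + ab.2 = ab.1 ^ (q - 1)} =>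
            s.1.1 ^ ij.1.1 * s.1.2 ^ ij.1.2 : _ → F)) := by

    haveI : CharP F p := aux_charP p n q hq h3 F hF
    rw [Fintype.linearIndependent_iff]
    intro c hc
    by_contra hex
    push_neg at hex
    obtain ⟨ij0, hc0⟩ := hex
    set c' : ℕ → ℕ → F := fun i j =>
      if h : (j ≤ q - 1 ∧ i * q + j * (q - 1) ≤ r) then c ⟨(i, j), h⟩ else 0 with hc'def
    set g : ℕ → F[X] := fun j => ∑ i ∈ Finset.range (r + 1), monomial i (c' i j) with hgdef
    have hcoeff : ∀ j k, (g j).coeff k = if k ≤ r then c' k j else 0 := by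
      intro j k
      simp only [hgdef, finset_sum_coeff, coeff_monomial]
      rw [Finset.sum_ite_eq' (Finset.range (r + 1)) k fun i => c' i j]
      simp [Nat.lt_succ_iff]
    have hc'cond : ∀ i j, c' i j ≠ 0 → j ≤ q - 1 ∧ i * q + j * (q - 1) ≤ r := by
      intro i j h
      by_contra hcond
      exact h (by simp only [hc'def]; exact dif_neg hcond)
    have hir : ∀ i j, c' i j ≠ 0 → i ≤ r := by
      intro i j h
      have h2 := (hc'cond i j h).2
      have h1 : i * 1 ≤ i * q := Nat.mul_le_mul_left i (by omega)
      omega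
    -- the coefficient corresponding to ij0 is nonzero
    have hc'0 : c' ij0.1.1 ij0.1.2 = c ij0 := by
      simp only [hc'def]
      rw [dif_pos ij0.2]
    have hgj0 : g ij0.1.2 ≠ 0 := by
      intro h
      have hco := hcoeff ij0.1.2 ij0.1.1
      rw [h, coeff_zero] at hco
      rw [if_pos (hir _ _ (by rw [hc'0]; exact hc0))] at hco
      rw [hc'0] at hco
      exact hc0 hco.symm
    -- the largest index with nonzero polynomial
    set m : ℕ := Nat.findGreatest (fun j => g j ≠ 0) (q - 1) with hmdef
    have hm_le : m ≤ q - 1 := Nat.findGreatest_le _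
    have hgm : g m ≠ 0 := Nat.findGreatest_spec (P := fun j => g j ≠ 0) ij0.2.1 hgj0
    have hgt : ∀ j, m < j → j ≤ q - 1 → g j = 0 := by
      intro j h1 h2
      by_contra h
      exact Nat.findGreatest_is_greatest h1 h2 h
    -- evaluation identity on the curve
    have heval : ∀ a b : F, b ^ q + b = a ^ (q - 1) →
        ∑ j ∈ Finset.range q, (g j).eval a * b ^ j = 0 := by
      intro a b hab
      have h0 := congrFun hc ⟨(a, b), hab⟩
      simp only [Finset.sum_apply, Pi.smul_apply, smul_eq_mul, Pi.zero_apply] at h0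
      rw [← h0]
      have hstep1 : ∀ j, (g j).eval a * b ^ j
          = ∑ i ∈ Finset.range (r + 1), c' i j * (a ^ i * b ^ j) := by
        intro j
        simp only [hgdef, eval_finset_sum, eval_monomial]
        rw [Finset.sum_mul]
        exact Finset.sum_congr rfl fun i _ => by ring
      calc ∑ j ∈ Finset.range q, (g j).eval a * b ^ j
          = ∑ j ∈ Finset.range q, ∑ i ∈ Finset.range (r + 1),
              c' i j * (a ^ i * b ^ j) := Finset.sum_congr rfl fun j _ => hstep1 j
        _ = ∑ x ∈ (Finset.range (r + 1)) ×ˢ (Finset.range q),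
              c' x.1 x.2 * (a ^ x.1 * b ^ x.2) := by rw [Finset.sum_product_right]
        _ = ∑ x ∈ hfin.toFinset, c' x.1 x.2 * (a ^ x.1 * b ^ x.2) := by
            refine (Finset.sum_subset ?_ ?_).symm
            · intro x hx
              rw [Set.Finite.mem_toFinset] at hx
              obtain ⟨h1, h2⟩ := hx
              rw [Finset.mem_product, Finset.mem_range, Finset.mem_range]
              have hmx : x.1 * 1 ≤ x.1 * q := Nat.mul_le_mul_left _ (by omega)
              exact ⟨by omega, by omega⟩
            · intro x _ hx
              rw [Set.Finite.mem_toFinset] at hx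
              have : c' x.1 x.2 = 0 := by
                simp only [hc'def]
                exact dif_neg hx
              rw [this, zero_mul]
        _ = ∑ ij : {ij : ℕ × ℕ // ij.2 ≤ q - 1 ∧ ij.1 * q + ij.2 * (q - 1) ≤ r},
              c' ij.1.1 ij.1.2 * (a ^ ij.1.1 * b ^ ij.1.2) := by
            refine Finset.sum_subtype _ ?_ _
            intro x
            rw [Set.Finite.mem_toFinset]
            exact Iff.rfl
        _ = ∑ ij : {ij : ℕ × ℕ // ij.2 ≤ q - 1 ∧ ij.1 * q + ij.2 * (q - 1) ≤ r},
              c ij * (a ^ ij.1.1 * b ^ ij.1.2) := by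
            refine Finset.sum_congr rfl fun ij _ => ?_
            congr 1
            simp only [hc'def]
            rw [dif_pos ij.2]
    -- the set of x-coordinates with nonempty fiber
    set A : Finset F := Finset.univ.filter (fun a : F => ∃ b : F, b ^ q + b = a ^ (q - 1))
      with hAdef
    -- g m vanishes on all of A
    have hAroot : ∀ a ∈ A, (g m).eval a = 0 := by
      intro a ha
      rw [hAdef, Finset.mem_filter] at ha
      obtain ⟨-, b₀, hb₀⟩ := ha
      by_contra hne
      -- the one-variable polynomial cutting out the fiber
      set h_a : F[X] := ∑ j ∈ Finset.range q, monomial j ((g j).eval a) with hhadef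
      have hhacoeff : ∀ k, h_a.coeff k = if k ≤ q - 1 then (g k).eval a else 0 := by
        intro k
        simp only [hhadef, finset_sum_coeff, coeff_monomial]
        rw [Finset.sum_ite_eq' (Finset.range q) k fun j => (g j).eval a]
        have : k ∈ Finset.range q ↔ k ≤ q - 1 := by
          rw [Finset.mem_range]; omega
        simp [this]
      have hhane : h_a ≠ 0 := by
        intro h
        have := hhacoeff m
        rw [h, coeff_zero, if_pos hm_le] at this
        exact hne this.symm
      have hhadeg : h_a.natDegree ≤ m := by
        rw [natDegree_le_iff_coeff_eq_zero]
        intro N hN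
        rw [hhacoeff]
        by_cases hNq : N ≤ q - 1
        · rw [if_pos hNq, hgt N hN hNq, eval_zero]
        · rw [if_neg hNq]
      have hroots : Finset.univ.filter (fun b : F => b ^ q + b = a ^ (q - 1))
          ⊆ h_a.roots.toFinset := by
        intro b hb
        rw [Finset.mem_filter] at hb
        rw [Multiset.mem_toFinset, mem_roots hhane]
        have : h_a.eval b = ∑ j ∈ Finset.range q, (g j).eval a * b ^ j := by
          simp only [hhadef, eval_finset_sum, eval_monomial]
        rw [IsRoot, this]
        exact heval a b hb.2
      have hcardfib := aux_fiber p n q hq h3 F hF a b₀ hb₀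
      have hle1 : q ≤ h_a.roots.toFinset.card := by
        rw [← hcardfib]
        exact Finset.card_le_card hroots
      have hle2 : h_a.roots.toFinset.card ≤ m :=
        le_trans (Multiset.toFinset_card_le _) (le_trans (card_roots' h_a) hhadeg)
      omega
    -- counting: A is contained in the roots of g m
    have hAcard : A.card ≤ (g m).natDegree := by
      have hsub : A ⊆ (g m).roots.toFinset := by
        intro a ha
        rw [Multiset.mem_toFinset, mem_roots hgm]
        exact hAroot a ha
      exact le_trans (Finset.card_le_card hsub)
        (le_trans (Multiset.toFinset_card_le _) (card_roots' _))
    -- degree bound for g m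
    have hD : (g m).natDegree * q + m * (q - 1) ≤ r := by
      have hlc : (g m).coeff (g m).natDegree ≠ 0 := by
        intro h
        exact hgm (leadingCoeff_eq_zero.mp h)
      have hco := hcoeff m (g m).natDegree
      by_cases hdr : (g m).natDegree ≤ r
      · rw [if_pos hdr] at hco
        have := (hc'cond _ _ (by rw [← hco]; exact hlc)).2
        exact this
      · rw [if_neg hdr] at hco
        exact absurd hco hlc
    -- cardinality of S
    set Sfin : Finset (F × F) :=
      Finset.univ.filter (fun ab : F × F => ab.2 ^ q + ab.2 = ab.1 ^ (q - 1)) with hSdef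
    have hrS : r < Sfin.card := by
      have : {ab : F × F | ab.2 ^ q + ab.2 = ab.1 ^ (q - 1)} = ↑Sfin := by
        ext ab
        simp [hSdef]
      rwa [this, Set.ncard_coe_finset] at hr
    have hScard : Sfin.card = A.card * q := by
      have h1 : Sfin.card = ∑ a : F, (Finset.univ.filter
          (fun b : F => b ^ q + b = a ^ (q - 1))).card := by
        rw [hSdef, Finset.card_filter, ← Finset.univ_product_univ, Finset.sum_product]
        exact Finset.sum_congr rfl fun a _ => (Finset.card_filter _ _).symm
      rw [h1, ← Finset.sum_filter_add_sum_filter_not Finset.univ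
        (fun a : F => ∃ b : F, b ^ q + b = a ^ (q - 1))]
      have h2 : ∀ a ∈ A, (Finset.univ.filter
          (fun b : F => b ^ q + b = a ^ (q - 1))).card = q := by
        intro a ha
        rw [hAdef, Finset.mem_filter] at ha
        obtain ⟨-, b₀, hb₀⟩ := ha
        exact aux_fiber p n q hq h3 F hF a b₀ hb₀
      have h3' : ∀ a ∈ Finset.univ.filter
          (fun a : F => ¬ ∃ b : F, b ^ q + b = a ^ (q - 1)),
          (Finset.univ.filter (fun b : F => b ^ q + b = a ^ (q - 1))).card = 0 := by
        intro a ha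
        rw [Finset.mem_filter] at ha
        rw [Finset.card_eq_zero, Finset.filter_eq_empty_iff]
        intro b _
        exact fun hb => ha.2 ⟨b, hb⟩
      rw [Finset.sum_congr rfl h2, Finset.sum_congr rfl h3',
        Finset.sum_const, Finset.sum_const_zero, smul_eq_mul, add_zero]
    -- final contradiction
    have hfin1 : A.card * q ≤ (g m).natDegree * q := Nat.mul_le_mul_right q hAcard
    have hfin2 : (g m).natDegree * q ≤ r := le_trans (Nat.le_add_right _ _) hD
    omega

  rw [finrank_span_eq_card li, ← Nat.card_coe_set_eq, Nat.card_eq_fintype_card]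
  exact Fintype.card_congr (Equiv.refl _)
end

section
/- Let p be a prime, q = p^n \geq 3 a power of p, \mathbb{F}_{q^2} the field with q^2 elements, and S = \{ (a,b) \in \mathbb{F}_{q^2} \times \mathbb{F}_{q^2} : b^q + b = a^{q-1} \}. Let r be an integer with (q-1)(q-2) - 1 \leq r < \#S, and let C_r \subseteq \mathbb{F}_{q^2}^{S} be the \mathbb{F}_{q^2}-linear span of the evaluation vectors v_{i,j} ((v_{i,j})_{(a,b)} = a^i b^j) over all (i,j) \in \mathbb{N}^2 with 0 \leq j \leq q-1 and i\,q + j\,(q-1) \leq r. Then \dim_{\mathbb{F}_{q^2}} C_r = r + 1 - (q-1)(q-2)/2. -/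
set_option linter.unusedSectionVars false
open Finset Polynomial

lemma sum_aux (q : ℕ) : 2 * ∑ j ∈ Finset.range q, (j-1) = (q-1)*(q-2) := by
  match q with
  | 0 => simp
  | 1 => simp
  | (m+2) =>
    rw [Finset.sum_range_succ']
    simp only [Nat.add_sub_cancel, Nat.zero_sub, add_zero]
    have h := Finset.sum_range_id_mul_two (m+1)
    have h3 : m + 1 - 1 = m := by omega
    rw [h3] at h
    rw [show m + 2 - 1 = m + 1 by omega]
    omega

lemma pairs_card (q : ℕ) :
    (((Finset.range q) ×ˢ (Finset.range q)).filter
      (fun kj : ℕ×ℕ => 0 < kj.1 ∧ kj.1 < kj.2)).card = (q-1)*(q-2)/2 := by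
  have key : (((Finset.range q) ×ˢ (Finset.range q)).filter
      (fun kj : ℕ×ℕ => 0 < kj.1 ∧ kj.1 < kj.2)).card
      = ∑ j ∈ Finset.range q, (j - 1) := by
    rw [Finset.card_eq_sum_card_fiberwise
      (f := Prod.snd) (t := Finset.range q)
      (fun x hx => by simp only [Finset.mem_coe, Finset.mem_filter, Finset.mem_product] at hx; exact hx.1.2)]
    refine Finset.sum_congr rfl (fun j hj => ?_)
    rw [show j - 1 = (Finset.Ico 1 j).card by rw [Nat.card_Ico]]
    apply Finset.card_nbij' (i := fun kj => kj.1) (j := fun k => (k, j))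
    · intro a ha
      simp only [Finset.mem_coe, Finset.mem_filter, Finset.mem_product, Finset.mem_Ico] at ha ⊢
      omega
    · intro a ha
      simp only [Finset.mem_range] at hj
      simp only [Finset.mem_coe, Finset.mem_Ico] at ha
      simp only [Finset.mem_coe, Finset.mem_filter, Finset.mem_product, Finset.mem_range]
      exact ⟨⟨⟨by omega, by omega⟩, by omega, by omega⟩, trivial⟩
    · intro a ha
      simp only [Finset.mem_coe, Finset.mem_filter] at ha
      exact (Prod.ext rfl ha.2.symm)
    · intro a _; rfl
  rw [key]
  have h := sum_aux q
  omega

lemma mul_pred_aux (a b : ℕ) (hb : 0 < b) : a * b = a * (b-1) + a := by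
  conv_lhs => rw [show b = (b-1)+1 by omega]
  rw [Nat.mul_succ]

lemma div_mod_unique_aux (q a b x y : ℕ) (hx : x < q) (hy : y < q)
    (h : a*q + x = b*q + y) : a = b ∧ x = y := by
  have h1 : (a*q + x) % q = x % q := by
    rw [Nat.add_comm, Nat.add_mul_mod_self_right]
  have h2 : (b*q + y) % q = y % q := by
    rw [Nat.add_comm, Nat.add_mul_mod_self_right]
  have hxq : x % q = x := Nat.mod_eq_of_lt hx
  have hyq : y % q = y := Nat.mod_eq_of_lt hy
  have hxy : x = y := by rw [← hxq, ← h1, h, h2, hyq]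
  subst hxy
  have haq : a * q = b * q := by omega
  exact ⟨Nat.eq_of_mul_eq_mul_right (by omega) haq, rfl⟩

lemma jv_spec (q v : ℕ) (hq : 0 < q) :
    (q - v % q) % q < q ∧ ∃ k, v + (q - v % q) % q = q * k := by
  have h1 : v % q < q := Nat.mod_lt _ hq
  have h2 := Nat.mod_add_div v q
  rcases Nat.eq_zero_or_pos (v % q) with h | h
  · have h0 : (q - v % q) % q = 0 := by rw [h, Nat.sub_zero, Nat.mod_self]
    exact ⟨by omega, ⟨v / q, by omega⟩⟩
  · have h3 : (q - v % q) % q = q - v % q := Nat.mod_eq_of_lt (by omega)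
    exact ⟨by omega, ⟨v / q + 1, by rw [h3, Nat.mul_add]; omega⟩⟩

lemma Tfin_card (q r : ℕ) (h3 : 3 ≤ q) (hr1 : (q-1)*(q-2) - 1 ≤ r) :
    (((Finset.range (r+1)) ×ˢ (Finset.range q)).filter
      (fun ij : ℕ×ℕ => ij.2 ≤ q - 1 ∧ ij.1 * q + ij.2 * (q-1) ≤ r)).card
    = r + 1 - (q-1)*(q-2)/2 := by
  have hq : 0 < q := by omega
  set Tfin := ((Finset.range (r+1)) ×ˢ (Finset.range q)).filter
      (fun ij : ℕ×ℕ => ij.2 ≤ q - 1 ∧ ij.1 * q + ij.2 * (q-1) ≤ r) with hTfin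
  set φ := fun ij : ℕ×ℕ => ij.1 * q + ij.2 * (q-1) with hφ
  set N := Tfin.image φ with hN
  -- injectivity of φ on Tfin
  have hinj : Set.InjOn φ Tfin := by
    rintro ⟨i1, j1⟩ h1 ⟨i2, j2⟩ h2 heq
    simp only [hTfin, Finset.mem_filter, Finset.mem_product, Finset.mem_range,
      Finset.mem_coe] at h1 h2
    simp only [hφ] at heq
    have e1 : (i1 + j1) * q + j2 = (i2 + j2) * q + j1 := by
      have a1 : j1 * q = j1 * (q-1) + j1 := mul_pred_aux _ _ hq
      have a2 : j2 * q = j2 * (q-1) + j2 := mul_pred_aux _ _ hq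
      have a3 : (i1 + j1) * q = i1 * q + j1 * q := Nat.add_mul _ _ _
      have a4 : (i2 + j2) * q = i2 * q + j2 * q := Nat.add_mul _ _ _
      omega
    obtain ⟨hab, hxy⟩ := div_mod_unique_aux q _ _ _ _ h2.1.2 h1.1.2 e1
    have : j1 = j2 := hxy.symm
    subst this
    have : i1 = i2 := by omega
    subst this
    rfl
  have hNcard : N.card = Tfin.card := Finset.card_image_of_injOn hinj
  have hNsub : N ⊆ Finset.range (r+1) := by
    intro v hv
    simp only [hN, Finset.mem_image] at hv
    obtain ⟨ij, hij, hrfl⟩ := hv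
    simp only [hTfin, Finset.mem_filter] at hij
    simp only [Finset.mem_range]
    simp only [hφ] at hrfl
    have := hij.2.2
    omega
  -- the gap set has (q-1)(q-2)/2 elements
  have hgap : (Finset.range (r+1) \ N).card = (q-1)*(q-2)/2 := by
    rw [← pairs_card q]
    apply Finset.card_nbij'
      (i := fun v => ((v + (q - v % q) % q)/q, (q - v % q) % q))
      (j := fun kj => kj.1 * q - kj.2)
    · -- forward map lands in Pairs
      intro v hv
      simp only [Finset.mem_coe, Finset.mem_sdiff, Finset.mem_range] at hv
      obtain ⟨hvr, hvN⟩ := hv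
      obtain ⟨hjlt, kv, hkv⟩ := jv_spec q v hq
      set jv := (q - v % q) % q with hjv
      have hdiv : (v + jv) / q = kv := by rw [hkv, Nat.mul_div_cancel_left _ hq]
      -- v is a gap: v < jv * (q-1)
      have hgaplt : v < jv * (q-1) := by
        by_contra hle
        push_neg at hle
        apply hvN
        simp only [hN, Finset.mem_image]
        refine ⟨(kv - jv, jv), ?_, ?_⟩
        · simp only [hTfin, Finset.mem_filter, Finset.mem_product, Finset.mem_range]
          have b1 : jv * q = jv * (q-1) + jv := mul_pred_aux _ _ hq
          have hkj : jv ≤ kv := by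
            have : jv * q ≤ q * kv := by omega
            have h' : jv * q = q * jv := Nat.mul_comm _ _
            have := Nat.le_of_mul_le_mul_left (by omega : q * jv ≤ q * kv) hq
            omega
          have b2 : (kv - jv) * q = kv * q - jv * q := Nat.sub_mul _ _ _
          have b3 : kv * q = q * kv := Nat.mul_comm _ _
          have hφv : (kv - jv) * q + jv * (q-1) = v := by omega
          have hile : kv - jv ≤ (kv - jv) * q := Nat.le_mul_of_pos_right _ hq
          exact ⟨⟨by omega, by omega⟩, by omega, by omega⟩
        · simp only [hφ]
          have b1 : jv * q = jv * (q-1) + jv := mul_pred_aux _ _ hq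
          have hkj : jv ≤ kv := by
            have h' : jv * q = q * jv := Nat.mul_comm _ _
            have := Nat.le_of_mul_le_mul_left (by omega : q * jv ≤ q * kv) hq
            omega
          have b2 : (kv - jv) * q = kv * q - jv * q := Nat.sub_mul _ _ _
          have b3 : kv * q = q * kv := Nat.mul_comm _ _
          omega
      have hjv1 : 1 ≤ jv := by
        rcases Nat.eq_zero_or_pos jv with h | h
        · rw [h] at hgaplt; simp at hgaplt
        · exact h
      have hkv1 : 1 ≤ kv := by
        rcases Nat.eq_zero_or_pos kv with h | h
        · rw [h, Nat.mul_zero] at hkv; omega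
        · exact h
      have hkvjv : kv < jv := by
        have b1 : jv * q = jv * (q-1) + jv := mul_pred_aux _ _ hq
        have : q * kv < jv * q := by omega
        have h' : jv * q = q * jv := Nat.mul_comm _ _
        exact Nat.lt_of_mul_lt_mul_left (by omega : q * kv < q * jv)
      simp only [Finset.mem_coe, Finset.mem_filter, Finset.mem_product, Finset.mem_range, ← hjv, hdiv]
      exact ⟨⟨by omega, by omega⟩, by omega, by omega⟩
    · -- backward map lands in gaps
      rintro ⟨k, j⟩ hkj
      simp only [Finset.mem_coe, Finset.mem_filter, Finset.mem_product, Finset.mem_range] at hkj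
      obtain ⟨⟨hkq, hjq2⟩, hk1, hklt⟩ := hkj
      simp only [Finset.mem_coe, Finset.mem_sdiff, Finset.mem_range]
      have f0 : (k+1) * q = k * q + q := Nat.succ_mul _ _
      have f1 : (k+1) * q ≤ j * q := Nat.mul_le_mul_right _ (by omega)
      have f2 : j * (q-1) ≤ (q-1) * (q-1) := Nat.mul_le_mul_right _ (by omega)
      have f3 : j * q = j * (q-1) + j := mul_pred_aux _ _ hq
      have f4 : (q-1) * (q-1) = (q-1) * (q-2) + (q-1) := by
        have := mul_pred_aux (q-1) (q-1) (by omega)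
        have h5 : q - 1 - 1 = q - 2 := by omega
        rw [h5] at this
        exact this
      constructor
      · omega
      · -- not a nongap
        intro hmem
        simp only [hN, Finset.mem_image] at hmem
        obtain ⟨⟨i0, j0⟩, hij0, hφ0⟩ := hmem
        simp only [hTfin, Finset.mem_filter, Finset.mem_product, Finset.mem_range] at hij0
        simp only [hφ] at hφ0
        have g1 : j0 * q = j0 * (q-1) + j0 := mul_pred_aux _ _ hq
        have g2 : (i0 + j0) * q = i0 * q + j0 * q := Nat.add_mul _ _ _
        have g3 : q ≤ k * q := Nat.le_mul_of_pos_left _ (by omega)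
        have e1 : (i0 + j0) * q + j = k * q + j0 := by omega
        obtain ⟨hab, hxy⟩ := div_mod_unique_aux q _ _ _ _ (by omega) (by omega) e1
        omega
    · -- left inverse
      intro v hv
      simp only [Finset.mem_coe, Finset.mem_sdiff, Finset.mem_range] at hv
      obtain ⟨hjlt, kv, hkv⟩ := jv_spec q v hq
      set jv := (q - v % q) % q with hjv
      have hdiv : (v + jv) / q = kv := by rw [hkv, Nat.mul_div_cancel_left _ hq]
      simp only [← hjv, hdiv]
      have b3 : kv * q = q * kv := Nat.mul_comm _ _
      omega
    · -- right inverse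
      rintro ⟨k, j⟩ hkj
      simp only [Finset.mem_coe, Finset.mem_filter, Finset.mem_product, Finset.mem_range] at hkj
      obtain ⟨⟨hkq, hjq2⟩, hk1, hklt⟩ := hkj
      have g3 : q ≤ k * q := Nat.le_mul_of_pos_left _ (by omega)
      have hv : k * q - j = (q - j) + (k-1) * q := by
        have : (k-1) * q = k * q - q := by rw [Nat.sub_mul, Nat.one_mul]
        omega
      have hmod : (k * q - j) % q = q - j := by
        rw [hv, Nat.add_mul_mod_self_right, Nat.mod_eq_of_lt (by omega)]
      have hjv : (q - (k * q - j) % q) % q = j := by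
        rw [hmod, Nat.sub_sub_self (by omega), Nat.mod_eq_of_lt (by omega)]
      have hsum : k * q - j + j = k * q := by omega
      simp only [hjv]
      rw [hsum, Nat.mul_div_cancel _ hq]
  have hsd : (Finset.range (r+1) \ N).card = (r+1) - N.card := by
    rw [Finset.card_sdiff_of_subset hNsub, Finset.card_range]
  have hNle : N.card ≤ r+1 := by
    have := Finset.card_le_card hNsub
    simpa using this
  omega



lemma char_eq (p n q : ℕ) [hp : Fact p.Prime] (hq : q = p ^ n) (h3 : 3 ≤ q)
    (F : Type*) [Field F] [Fintype F] (hF : Fintype.card F = q ^ 2) : CharP F p := by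
  set p' := ringChar F with hp'
  haveI : CharP F p' := ringChar.charP F
  have hp'prime : p'.Prime := CharP.char_is_prime F p'
  obtain ⟨m, hmp, hcard⟩ := FiniteField.card F p'
  have hn : n ≠ 0 := by
    rintro rfl
    simp at hq
    omega
  have hpq : p ∣ q := hq ▸ dvd_pow_self p hn
  have hpcard : p ∣ Fintype.card F := by
    rw [hF]
    exact hpq.trans (dvd_pow_self q two_ne_zero)
  rw [hcard] at hpcard
  have : p ∣ p' := hp.out.dvd_of_dvd_pow hpcard
  have : p = p' := (Nat.prime_dvd_prime_iff_eq hp.out hp'prime).mp this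
  rw [this]
  exact ringChar.charP F

section Field

variable {F : Type*} [Field F] [Fintype F] [DecidableEq F]

lemma psi_add (p n q : ℕ) [Fact p.Prime] [CharP F p] (hq : q = p ^ n) (a b : F) :
    (a + b) ^ q + (a + b) = (a ^ q + a) + (b ^ q + b) := by
  subst hq
  rw [add_pow_char_pow]
  ring

lemma psi_sub (p n q : ℕ) [Fact p.Prime] [CharP F p] (hq : q = p ^ n) (a b : F) :
    (a - b) ^ q + (a - b) = (a ^ q + a) - (b ^ q + b) := by
  subst hq
  rw [sub_pow_char_pow]
  ring

/-- roots of a nonzero polynomial: cardinality bound for the filter -/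
lemma filter_eval_card_le (P : F[X]) (hP : P ≠ 0) :
    (Finset.univ.filter fun b : F => P.eval b = 0).card ≤ P.natDegree := by
  calc (Finset.univ.filter fun b : F => P.eval b = 0).card
      ≤ P.roots.toFinset.card := by
        apply Finset.card_le_card
        intro b hb
        simp only [Finset.mem_filter, Finset.mem_univ, true_and] at hb
        simp only [Multiset.mem_toFinset, Polynomial.mem_roots hP, Polynomial.IsRoot.def]
        exact hb
    _ ≤ Multiset.card P.roots := Multiset.toFinset_card_le _
    _ ≤ P.natDegree := Polynomial.card_roots' P

lemma Xq_add_X_monic (q : ℕ) (h3 : 3 ≤ q) : ((X : F[X]) ^ q + X).Monic := by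
  apply Polynomial.monic_X_pow_add
  calc (X : F[X]).degree ≤ 1 := Polynomial.degree_X_le
    _ < q := by exact_mod_cast Nat.lt_of_lt_of_le (by norm_num) h3

lemma Xq_add_X_natDegree (q : ℕ) (h3 : 3 ≤ q) : ((X : F[X]) ^ q + X).natDegree = q := by
  rw [Polynomial.natDegree_add_eq_left_of_natDegree_lt, Polynomial.natDegree_X_pow]
  rw [Polynomial.natDegree_X_pow, Polynomial.natDegree_X]
  omega


lemma fiber_card_eq_ker (p n q : ℕ) [Fact p.Prime] [CharP F p] (hq : q = p ^ n)
    (c : F) (b0 : F) (hb0 : b0 ^ q + b0 = c) :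
    (Finset.univ.filter fun b : F => b ^ q + b = c).card
    = (Finset.univ.filter fun b : F => b ^ q + b = 0).card := by
  apply Finset.card_nbij' (i := fun b => b - b0) (j := fun k => k + b0)
  · intro b hb
    simp only [Finset.mem_coe, Finset.mem_filter, Finset.mem_univ, true_and] at hb ⊢
    rw [psi_sub p n q hq, hb, hb0, sub_self]
  · intro k hk
    simp only [Finset.mem_coe, Finset.mem_filter, Finset.mem_univ, true_and] at hk ⊢
    rw [psi_add p n q hq, hk, hb0, zero_add]
  · intro b _
    simp
  · intro k _
    simp

lemma ker_card (p n q : ℕ) [Fact p.Prime] [CharP F p] (hq : q = p ^ n) (h3 : 3 ≤ q)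
    (hF : Fintype.card F = q ^ 2) :
    (Finset.univ.filter fun b : F => b ^ q + b = 0).card = q := by
  have hq0 : 0 < q := by omega
  set K := Finset.univ.filter fun b : F => b ^ q + b = 0 with hK
  have hKle : K.card ≤ q := by
    have heq : K = Finset.univ.filter fun b : F => ((X : F[X]) ^ q + X).eval b = 0 := by
      apply Finset.filter_congr
      intro b _
      simp
    rw [heq]
    have := filter_eval_card_le ((X : F[X]) ^ q + X) (Xq_add_X_monic q h3).ne_zero
    rw [Xq_add_X_natDegree q h3] at this
    exact this
  set I := Finset.univ.image (fun b : F => b ^ q + b) with hI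
  have hIle : I.card ≤ q := by
    have hP2deg : ((X : F[X]) ^ q - X).natDegree = q := by
      rw [sub_eq_add_neg, Polynomial.natDegree_add_eq_left_of_natDegree_lt,
        Polynomial.natDegree_X_pow]
      rw [Polynomial.natDegree_X_pow, Polynomial.natDegree_neg, Polynomial.natDegree_X]
      omega
    have hP2ne : ((X : F[X]) ^ q - X) ≠ 0 := by
      intro h
      have := hP2deg
      rw [h] at this
      simp at this
      omega
    have hsub : I ⊆ Finset.univ.filter fun c : F => ((X : F[X]) ^ q - X).eval c = 0 := by
      intro c hc
      simp only [hI, Finset.mem_image, Finset.mem_univ, true_and] at hc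
      obtain ⟨b, rfl⟩ := hc
      simp only [Finset.mem_filter, Finset.mem_univ, true_and, Polynomial.eval_sub,
        Polynomial.eval_pow, Polynomial.eval_X]
      have h1 : (b ^ q + b) ^ q = b ^ q ^ 2 + b ^ q := by
        subst hq
        rw [add_pow_char_pow, ← pow_mul, ← pow_mul, ← pow_add]
        congr 2
        ring
      have h2 : b ^ q ^ 2 = b := by rw [← hF, FiniteField.pow_card]
      rw [h1, h2]
      ring
    calc I.card ≤ _ := Finset.card_le_card hsub
      _ ≤ q := by
        have := filter_eval_card_le ((X : F[X]) ^ q - X) hP2ne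
        rw [hP2deg] at this
        exact this
  have hsum : Fintype.card F = ∑ c ∈ I, (Finset.univ.filter fun b : F => b ^ q + b = c).card := by
    rw [← Finset.card_univ]
    apply Finset.card_eq_sum_card_fiberwise
    intro x _
    exact Finset.mem_image_of_mem _ (Finset.mem_univ x)
  have hfib : ∀ c ∈ I, (Finset.univ.filter fun b : F => b ^ q + b = c).card = K.card := by
    intro c hc
    simp only [hI, Finset.mem_image, Finset.mem_univ, true_and] at hc
    obtain ⟨b0, hb0⟩ := hc
    exact fiber_card_eq_ker p n q hq c b0 hb0
  have htot : q * q = I.card * K.card := by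
    rw [← sq, ← hF, hsum, Finset.sum_congr rfl hfib, Finset.sum_const, smul_eq_mul]
  have h1 : I.card * K.card ≤ q * K.card := Nat.mul_le_mul_right _ hIle
  have h2 : q * q ≤ q * K.card := by omega
  exact Nat.le_antisymm hKle (Nat.le_of_mul_le_mul_left h2 hq0)


lemma fiber_card_q (p n q : ℕ) [Fact p.Prime] [CharP F p] (hq : q = p ^ n) (h3 : 3 ≤ q)
    (hF : Fintype.card F = q ^ 2) (c : F) (hc : ∃ b0 : F, b0 ^ q + b0 = c) :
    (Finset.univ.filter fun b : F => b ^ q + b = c).card = q := by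
  obtain ⟨b0, hb0⟩ := hc
  rw [fiber_card_eq_ker p n q hq c b0 hb0, ker_card p n q hq h3 hF]

lemma S_card (p n q : ℕ) [Fact p.Prime] [CharP F p] (hq : q = p ^ n) (h3 : 3 ≤ q)
    (hF : Fintype.card F = q ^ 2) :
    (Finset.univ.filter fun ab : F × F => ab.2 ^ q + ab.2 = ab.1 ^ (q-1)).card
    = q * (Finset.univ.filter fun a : F => ∃ b : F, b ^ q + b = a ^ (q-1)).card := by
  set P' := Finset.univ.filter fun a : F => ∃ b : F, b ^ q + b = a ^ (q-1) with hP'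
  rw [Finset.card_eq_sum_card_fiberwise (f := Prod.fst) (t := P') (fun ab hab => by
    simp only [Finset.mem_coe, hP', Finset.mem_filter, Finset.mem_univ, true_and] at hab ⊢
    exact ⟨ab.2, hab⟩)]
  have hfib : ∀ a ∈ P',
      ((Finset.univ.filter fun ab : F × F => ab.2 ^ q + ab.2 = ab.1 ^ (q-1)).filter
        (fun ab => ab.1 = a)).card = q := by
    intro a ha
    simp only [hP', Finset.mem_filter, Finset.mem_univ, true_and] at ha
    have hfq := fiber_card_q p n q hq h3 hF (a ^ (q-1)) ha
    refine Eq.trans ?_ hfq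
    apply Finset.card_nbij' (i := fun ab => ab.2) (j := fun b => (a, b))
    · intro ab hab
      simp only [Finset.mem_coe, Finset.mem_filter, Finset.mem_univ, true_and] at hab ⊢
      rw [← hab.2]
      exact hab.1
    · intro b hb
      simp only [Finset.mem_coe, Finset.mem_filter, Finset.mem_univ, true_and] at hb ⊢
      exact ⟨hb, trivial⟩
    · intro ab hab
      simp only [Finset.mem_coe, Finset.mem_filter] at hab
      exact (Prod.ext hab.2.symm rfl)
    · intro b _
      rfl
  rw [Finset.sum_congr rfl hfib, Finset.sum_const, smul_eq_mul, Nat.mul_comm]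


lemma eval_indep (p n q : ℕ) [Fact p.Prime] (hq : q = p ^ n) (h3 : 3 ≤ q)
    [CharP F p] (hF : Fintype.card F = q ^ 2) (r : ℕ)
    (hr2 : r < (Finset.univ.filter fun ab : F × F => ab.2 ^ q + ab.2 = ab.1 ^ (q-1)).card) :
    LinearIndependent F
      (fun ij : {ij : ℕ × ℕ // ij.2 ≤ q - 1 ∧ ij.1 * q + ij.2 * (q - 1) ≤ r} =>
        (fun s : {ab : F × F | ab.2 ^ q + ab.2 = ab.1 ^ (q - 1)} =>
          s.1.1 ^ ij.1.1 * s.1.2 ^ ij.1.2 : _ → F)) := by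
  have hq0 : 0 < q := by omega
  haveI : Fintype {ij : ℕ × ℕ // ij.2 ≤ q - 1 ∧ ij.1 * q + ij.2 * (q - 1) ≤ r} :=
    Fintype.ofFinset (((Finset.range (r+1)) ×ˢ (Finset.range q)).filter
      (fun ij : ℕ×ℕ => ij.2 ≤ q - 1 ∧ ij.1 * q + ij.2 * (q-1) ≤ r)) (by
      intro ij
      simp only [Finset.mem_filter, Finset.mem_product, Finset.mem_range]
      constructor
      · rintro ⟨_, h⟩; exact h
      · rintro ⟨h1, h2⟩
        have : ij.1 ≤ ij.1 * q := Nat.le_mul_of_pos_right _ hq0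
        exact ⟨⟨by omega, by omega⟩, h1, h2⟩)
  rw [Fintype.linearIndependent_iff]
  intro c hc
  set C : ℕ×ℕ → F := fun ij =>
    if h : (ij.2 ≤ q - 1 ∧ ij.1 * q + ij.2 * (q-1) ≤ r) then c ⟨ij, h⟩ else 0 with hC
  have hmem : ∀ ij : ℕ×ℕ, ij ∈ (((Finset.range (r+1)) ×ˢ (Finset.range q)).filter
      (fun ij : ℕ×ℕ => ij.2 ≤ q - 1 ∧ ij.1 * q + ij.2 * (q-1) ≤ r))
      ↔ (ij.2 ≤ q - 1 ∧ ij.1 * q + ij.2 * (q-1) ≤ r) := by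
    intro ij
    simp only [Finset.mem_filter, Finset.mem_product, Finset.mem_range]
    constructor
    · rintro ⟨_, h⟩; exact h
    · rintro ⟨h1, h2⟩
      have : ij.1 ≤ ij.1 * q := Nat.le_mul_of_pos_right _ hq0
      exact ⟨⟨by omega, by omega⟩, h1, h2⟩
  have key : ∀ a b : F, b ^ q + b = a ^ (q-1) →
      ∑ jj ∈ Finset.range q, (∑ i ∈ Finset.range (r+1), C (i, jj) * a ^ i) * b ^ jj = 0 := by
    intro a b hab
    have h0 := congrFun hc ⟨(a,b), hab⟩
    simp only [Finset.sum_apply, Pi.smul_apply, smul_eq_mul, Pi.zero_apply] at h0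
    have e1 : ∑ ij ∈ (((Finset.range (r+1)) ×ˢ (Finset.range q)).filter
          (fun ij : ℕ×ℕ => ij.2 ≤ q - 1 ∧ ij.1 * q + ij.2 * (q-1) ≤ r)),
          C ij * (a ^ ij.1 * b ^ ij.2)
        = ∑ t : {ij : ℕ × ℕ // ij.2 ≤ q - 1 ∧ ij.1 * q + ij.2 * (q - 1) ≤ r},
          C t.1 * (a ^ t.1.1 * b ^ t.1.2) :=
      Finset.sum_subtype _ hmem _
    have e2 : ∑ t : {ij : ℕ × ℕ // ij.2 ≤ q - 1 ∧ ij.1 * q + ij.2 * (q - 1) ≤ r},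
          C t.1 * (a ^ t.1.1 * b ^ t.1.2)
        = ∑ t : {ij : ℕ × ℕ // ij.2 ≤ q - 1 ∧ ij.1 * q + ij.2 * (q - 1) ≤ r},
          c t * (a ^ t.1.1 * b ^ t.1.2) := by
      apply Finset.sum_congr rfl
      intro t _
      simp only [hC]
      rw [dif_pos t.2]
    have e3 : ∑ ij ∈ ((Finset.range (r+1)) ×ˢ (Finset.range q)),
          C ij * (a ^ ij.1 * b ^ ij.2)
        = ∑ ij ∈ (((Finset.range (r+1)) ×ˢ (Finset.range q)).filter
          (fun ij : ℕ×ℕ => ij.2 ≤ q - 1 ∧ ij.1 * q + ij.2 * (q-1) ≤ r)),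
          C ij * (a ^ ij.1 * b ^ ij.2) := by
      symm
      apply Finset.sum_subset (Finset.filter_subset _ _)
      intro x hx hnx
      have hCx : C x = 0 := by
        simp only [hC]
        apply dif_neg
        intro hcond
        exact hnx ((hmem x).mpr hcond)
      rw [hCx, zero_mul]
    have e4 : ∑ jj ∈ Finset.range q, (∑ i ∈ Finset.range (r+1), C (i, jj) * a ^ i) * b ^ jj
        = ∑ ij ∈ ((Finset.range (r+1)) ×ˢ (Finset.range q)), C ij * (a ^ ij.1 * b ^ ij.2) := by
      rw [Finset.sum_product_right]
      apply Finset.sum_congr rfl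
      intro jj _
      rw [Finset.sum_mul]
      apply Finset.sum_congr rfl
      intro i _
      ring
    rw [e4, e3, e1, e2]
    exact h0
  set P' := Finset.univ.filter (fun a : F => ∃ b : F, b ^ q + b = a ^ (q-1)) with hP'
  have hScard := S_card p n q hq h3 hF (F := F)
  rw [← hP'] at hScard
  have hrP : r / q < P'.card := by
    rw [Nat.div_lt_iff_lt_mul hq0]
    have hcomm : q * P'.card = P'.card * q := Nat.mul_comm _ _
    omega
  have hinner : ∀ a ∈ P', ∀ jj ∈ Finset.range q,
      (∑ i ∈ Finset.range (r+1), C (i, jj) * a ^ i) = 0 := by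
    intro a ha jj hjj
    simp only [hP', Finset.mem_filter, Finset.mem_univ, true_and] at ha
    set Ha : F[X] := ∑ j2 ∈ Finset.range q,
      Polynomial.C (∑ i ∈ Finset.range (r+1), C (i, j2) * a ^ i) * X ^ j2 with hHa
    have hdeg : Ha.natDegree ≤ q - 1 := by
      apply Polynomial.natDegree_sum_le_of_forall_le
      intro j2 hj2
      simp only [Finset.mem_range] at hj2
      exact le_trans (Polynomial.natDegree_C_mul_X_pow_le _ _) (by omega)
    have hzero : Ha = 0 := by
      apply Polynomial.eq_zero_of_natDegree_lt_card_of_eval_eq_zero' Ha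
        (Finset.univ.filter fun b : F => b ^ q + b = a ^ (q-1))
      · intro b hb
        simp only [Finset.mem_filter, Finset.mem_univ, true_and] at hb
        simp only [hHa, Polynomial.eval_finset_sum, Polynomial.eval_mul, Polynomial.eval_C,
          Polynomial.eval_pow, Polynomial.eval_X]
        exact key a b hb
      · rw [fiber_card_q p n q hq h3 hF _ ha]
        omega
    have hco := congrArg (fun P : F[X] => Polynomial.coeff P jj) hzero
    simp only [hHa, Polynomial.finset_sum_coeff, Polynomial.coeff_C_mul_X_pow,
      Polynomial.coeff_zero, Finset.sum_ite_eq, hjj, if_pos] at hco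
    exact hco
  have houter : ∀ jj ∈ Finset.range q, ∀ i ∈ Finset.range (r/q + 1), C (i, jj) = 0 := by
    intro jj hjj
    set G : F[X] := ∑ i ∈ Finset.range (r/q + 1), Polynomial.C (C (i, jj)) * X ^ i with hG
    have hGdeg : G.natDegree ≤ r / q := by
      apply Polynomial.natDegree_sum_le_of_forall_le
      intro i hi
      simp only [Finset.mem_range] at hi
      exact le_trans (Polynomial.natDegree_C_mul_X_pow_le _ _) (by omega)
    have hGeval : ∀ a ∈ P', G.eval a = 0 := by
      intro a ha
      simp only [hG, Polynomial.eval_finset_sum, Polynomial.eval_mul, Polynomial.eval_C,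
        Polynomial.eval_pow, Polynomial.eval_X]
      have hsb : ∑ i ∈ Finset.range (r/q+1), C (i,jj) * a ^ i
          = ∑ i ∈ Finset.range (r+1), C (i,jj) * a ^ i := by
        apply Finset.sum_subset
        · intro x hx
          simp only [Finset.mem_range] at hx ⊢
          have : r/q ≤ r := Nat.div_le_self r q
          omega
        · intro x hx hnx
          simp only [Finset.mem_range] at hx hnx
          have hx2 : r/q < x := by omega
          have hCz : C (x, jj) = 0 := by
            simp only [hC]
            apply dif_neg
            rintro ⟨h1, h2⟩
            have hxq : x * q ≤ r := by omega
            have : x ≤ r / q := (Nat.le_div_iff_mul_le hq0).mpr hxq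
            omega
          rw [hCz, zero_mul]
      rw [hsb]
      exact hinner a ha jj hjj
    have hGzero : G = 0 :=
      Polynomial.eq_zero_of_natDegree_lt_card_of_eval_eq_zero' G P' hGeval
        (lt_of_le_of_lt hGdeg hrP)
    intro i hi
    have hco := congrArg (fun P : F[X] => Polynomial.coeff P i) hGzero
    simp only [hG, Polynomial.finset_sum_coeff, Polynomial.coeff_C_mul_X_pow,
      Polynomial.coeff_zero, Finset.sum_ite_eq, hi, if_pos] at hco
    exact hco
  intro t
  have h1 : t.1.2 < q := by have := t.2.1; omega
  have h2 : t.1.1 ≤ r / q := by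
    rw [Nat.le_div_iff_mul_le hq0]
    have := t.2.2
    omega
  have hz := houter t.1.2 (Finset.mem_range.mpr h1) t.1.1 (Finset.mem_range.mpr (by omega))
  have hct : c t = C t.1 := by
    simp only [hC]
    rw [dif_pos t.2]
  rw [hct]
  exact hz

end Field


/-- Let p be prime, q = pⁿ ≥ 3, F the field with q² elements, and
S = {(a,b) ∈ F × F : b^q + b = a^(q-1)}. For (q-1)(q-2) - 1 ≤ r < #S, the span C_r
of the evaluation vectors v_{i,j} ((v_{i,j})_{(a,b)} = aⁱbʲ) over pairs (i,j) with
j ≤ q-1 and i·q + j·(q-1) ≤ r has dimension r + 1 - (q-1)(q-2)/2. -/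
theorem code_dimension_riemann_roch (p n q : ℕ) [Fact p.Prime]
    (hq : q = p ^ n) (h3 : 3 ≤ q)
    (F : Type*) [Field F] [Fintype F] (hF : Fintype.card F = q ^ 2)
    (r : ℕ) (hr1 : (q - 1) * (q - 2) - 1 ≤ r)
    (hr2 : r < {ab : F × F | ab.2 ^ q + ab.2 = ab.1 ^ (q - 1)}.ncard) :
    Module.finrank F
      (Submodule.span F (Set.range
        (fun ij : {ij : ℕ × ℕ // ij.2 ≤ q - 1 ∧ ij.1 * q + ij.2 * (q - 1) ≤ r} =>
          (fun s : {ab : F × F | ab.2 ^ q + ab.2 = ab.1 ^ (q - 1)} =>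
            s.1.1 ^ ij.1.1 * s.1.2 ^ ij.1.2 : _ → F))))
      = r + 1 - (q - 1) * (q - 2) / 2 := by
  classical
  have hq0 : 0 < q := by omega
  haveI : CharP F p := char_eq p n q hq h3 F hF
  have hSS : {ab : F × F | ab.2 ^ q + ab.2 = ab.1 ^ (q - 1)}.ncard
      = (Finset.univ.filter fun ab : F × F => ab.2 ^ q + ab.2 = ab.1 ^ (q-1)).card := by
    rw [Set.ncard_eq_toFinset_card']
    congr 1
    ext ab
    simp
  rw [hSS] at hr2
  have hmem : ∀ ij : ℕ×ℕ, ij ∈ (((Finset.range (r+1)) ×ˢ (Finset.range q)).filter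
      (fun ij : ℕ×ℕ => ij.2 ≤ q - 1 ∧ ij.1 * q + ij.2 * (q-1) ≤ r))
      ↔ (ij.2 ≤ q - 1 ∧ ij.1 * q + ij.2 * (q - 1) ≤ r) := by
    intro ij
    simp only [Finset.mem_filter, Finset.mem_product, Finset.mem_range]
    constructor
    · rintro ⟨_, h⟩; exact h
    · rintro ⟨h1, h2⟩
      have : ij.1 ≤ ij.1 * q := Nat.le_mul_of_pos_right _ hq0
      exact ⟨⟨by omega, by omega⟩, h1, h2⟩
  haveI instT : Fintype {ij : ℕ × ℕ // ij.2 ≤ q - 1 ∧ ij.1 * q + ij.2 * (q - 1) ≤ r} :=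
    Fintype.ofFinset _ hmem
  have hli := eval_indep p n q hq h3 (F := F) hF r hr2
  rw [finrank_span_eq_card hli]
  rw [Fintype.card_of_subtype _ hmem]
  exact Tfin_card q r h3 hr1
end

section
/- Let p be a prime, q = p^n \geq 3 a power of p, \mathbb{F}_{q^2} the field with q^2 elements, and S = \{ (a,b) \in \mathbb{F}_{q^2} \times \mathbb{F}_{q^2} : b^q + b = a^{q-1} \}. Let r be an integer with r \geq q^3 + q^2 - 3q + 1, and let C_r \subseteq \mathbb{F}_{q^2}^{S} be the \mathbb{F}_{q^2}-linear span of the evaluation vectors v_{i,j} ((v_{i,j})_{(a,b)} = a^i b^j) over all (i,j) \in \mathbb{N}^2 with 0 \leq j \leq q-1 and i\,q + j\,(q-1) \leq r. Then C_r is the whole space \mathbb{F}_{q^2}^{S}; equivalently, \dim_{\mathbb{F}_{q^2}} C_r = \#S. -/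
open Polynomial Finset

/-- Let p be prime, q = pⁿ ≥ 3, F the field with q² elements, and
S = {(a,b) ∈ F × F : b^q + b = a^(q-1)}. For r ≥ q³ + q² - 3q + 1, the span C_r of
the evaluation vectors v_{i,j} ((v_{i,j})_{(a,b)} = aⁱbʲ) over pairs (i,j) with
j ≤ q-1 and i·q + j·(q-1) ≤ r is the whole space F^S. -/
theorem code_full_space (p n q : ℕ) [Fact p.Prime]
    (hq : q = p ^ n) (h3 : 3 ≤ q)
    (F : Type*) [Field F] [Fintype F] (hF : Fintype.card F = q ^ 2)
    (r : ℕ) (hr : q ^ 3 + q ^ 2 - 3 * q + 1 ≤ r) :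
    Submodule.span F (Set.range
        (fun ij : {ij : ℕ × ℕ // ij.2 ≤ q - 1 ∧ ij.1 * q + ij.2 * (q - 1) ≤ r} =>
          (fun s : {ab : F × F | ab.2 ^ q + ab.2 = ab.1 ^ (q - 1)} =>
            s.1.1 ^ ij.1.1 * s.1.2 ^ ij.1.2 : _ → F))) = ⊤ := by
  classical
  set S := {ab : F × F | ab.2 ^ q + ab.2 = ab.1 ^ (q - 1)} with hS
  set G : Set (S → F) := Set.range
        (fun ij : {ij : ℕ × ℕ // ij.2 ≤ q - 1 ∧ ij.1 * q + ij.2 * (q - 1) ≤ r} =>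
          (fun s : S => s.1.1 ^ ij.1.1 * s.1.2 ^ ij.1.2)) with hG
  have hq1 : 1 ≤ q := by omega
  have hq2 : 1 ≤ q ^ 2 := Nat.one_le_pow _ _ (by omega)
  -- arithmetic bound
  have harith : ∀ i j : ℕ, i < q ^ 2 → j < q → i * q + j * (q - 1) ≤ r := by
    intro i j hi hj
    have h1 : i * q + j * (q - 1) ≤ (q ^ 2 - 1) * q + (q - 1) * (q - 1) :=
      Nat.add_le_add (Nat.mul_le_mul_right _ (by omega)) (Nat.mul_le_mul_right _ (by omega))
    have h3q : 3 * q ≤ q ^ 3 + q ^ 2 := by nlinarith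
    have h2 : (q ^ 2 - 1) * q + (q - 1) * (q - 1) = q ^ 3 + q ^ 2 - 3 * q + 1 := by
      zify [hq1, hq2, h3q]
      ring
    omega
  -- monomial membership
  have hmono : ∀ i j : ℕ, i < q ^ 2 → j < q →
      (fun s : S => s.1.1 ^ i * s.1.2 ^ j) ∈ Submodule.span F G := by
    intro i j hi hj
    exact Submodule.subset_span ⟨⟨(i, j), by omega, harith i j hi hj⟩, rfl⟩
  -- polynomial products membership
  have hpoly : ∀ P Q : F[X], P.natDegree < q ^ 2 → Q.natDegree < q →
      (fun s : S => P.eval s.1.1 * Q.eval s.1.2) ∈ Submodule.span F G := by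
    intro P Q hP hQ
    have hrep : (fun s : S => P.eval s.1.1 * Q.eval s.1.2) =
        ∑ i ∈ Finset.range (q ^ 2), ∑ j ∈ Finset.range q,
          (P.coeff i * Q.coeff j) • (fun s : S => s.1.1 ^ i * s.1.2 ^ j) := by
      funext s
      simp only [Finset.sum_apply, Pi.smul_apply, smul_eq_mul]
      rw [Polynomial.eval_eq_sum_range' hP, Polynomial.eval_eq_sum_range' hQ,
        Finset.sum_mul_sum]
      exact Finset.sum_congr rfl fun i _ => Finset.sum_congr rfl fun j _ => by ring
    rw [hrep]
    refine Submodule.sum_mem _ fun i hi => Submodule.sum_mem _ fun j hj => ?_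
    exact Submodule.smul_mem _ _
      (hmono i j (Finset.mem_range.mp hi) (Finset.mem_range.mp hj))
  -- indicator functions membership
  rw [Submodule.eq_top_iff']
  intro f
  have hfs : f = ∑ s₀ : S, f s₀ • (fun s : S => if s₀ = s then (1 : F) else 0) := by
    funext s
    simp only [Finset.sum_apply, Pi.smul_apply, smul_eq_mul, mul_ite, mul_one, mul_zero]
    rw [Finset.sum_eq_single s] <;> simp +contextual [eq_comm]
  rw [hfs]
  refine Submodule.sum_mem _ fun s₀ _ => Submodule.smul_mem _ _ ?_
  obtain ⟨⟨a₀, b₀⟩, hs₀⟩ := s₀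
  have hs₀' : b₀ ^ q + b₀ = a₀ ^ (q - 1) := hs₀
  -- Lagrange basis in the a coordinate
  set P : F[X] := Lagrange.basis Finset.univ id a₀ with hPdef
  have hinj : Set.InjOn (id : F → F) ↑(Finset.univ : Finset F) := Function.injective_id.injOn
  have hPdeg : P.natDegree < q ^ 2 := by
    rw [hPdef, Lagrange.natDegree_basis hinj (Finset.mem_univ _), Finset.card_univ, hF]
    omega
  -- the fiber in the b coordinate
  set T : Finset F := Finset.univ.filter (fun b : F => b ^ q + b = a₀ ^ (q - 1)) with hT
  have hb₀T : b₀ ∈ T := by simp [hT, hs₀']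
  have hTcard : T.card ≤ q := by
    set g : F[X] := X ^ q + X - C (a₀ ^ (q - 1)) with hg
    have hgdeg : g.natDegree = q := by
      rw [hg]
      compute_degree!
      simp [show ¬(1 = q) by omega, show ¬(q = 0) by omega]
    have hg0 : g ≠ 0 := fun h => by simp [h] at hgdeg; omega
    have hsub : T ⊆ g.roots.toFinset := by
      intro b hb
      rw [Multiset.mem_toFinset, Polynomial.mem_roots hg0]
      simp only [hT, Finset.mem_filter] at hb
      simp [Polynomial.IsRoot, hg, sub_eq_zero, hb.2]
    calc T.card ≤ g.roots.toFinset.card := Finset.card_le_card hsub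
      _ ≤ Multiset.card g.roots := Multiset.toFinset_card_le _
      _ ≤ g.natDegree := Polynomial.card_roots' g
      _ = q := hgdeg
  have hinjT : Set.InjOn (id : F → F) ↑T := Function.injective_id.injOn
  set Q : F[X] := Lagrange.basis T id b₀ with hQdef
  have hQdeg : Q.natDegree < q := by
    rw [hQdef, Lagrange.natDegree_basis hinjT hb₀T]
    have : 1 ≤ T.card := Finset.card_pos.mpr ⟨b₀, hb₀T⟩
    omega
  have key : (fun s : S => if (⟨(a₀, b₀), hs₀⟩ : S) = s then (1 : F) else 0) =
      (fun s : S => P.eval s.1.1 * Q.eval s.1.2) := by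
    funext s
    obtain ⟨⟨a, b⟩, hs⟩ := s
    have hs' : b ^ q + b = a ^ (q - 1) := hs
    by_cases ha : a = a₀
    · have hPa : P.eval a = 1 := by
        rw [ha, hPdef]; simpa using Lagrange.eval_basis_self hinj (Finset.mem_univ a₀)
      have hbT : b ∈ T := by simp [hT, hs', ha]
      by_cases hb : b = b₀
      · have heq : (⟨(a₀, b₀), hs₀⟩ : S) = ⟨(a, b), hs⟩ := Subtype.ext (by simp [ha, hb])
        rw [if_pos heq]
        have hQb : Q.eval b = 1 := by
          rw [hb, hQdef]; simpa using Lagrange.eval_basis_self hinjT hb₀T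
        simp [hPa, hQb]
      · have hQb : Q.eval b = 0 := by
          rw [hQdef]
          simpa using Lagrange.eval_basis_of_ne (v := (id : F → F)) (s := T)
            (fun h : b₀ = b => hb (by simpa using h.symm)) hbT
        rw [if_neg (fun h => hb (congrArg (fun x : S => x.1.2) h).symm), hQb]
        ring
    · have hPa : P.eval a = 0 := by
        rw [hPdef]
        simpa using Lagrange.eval_basis_of_ne (v := (id : F → F))
          (fun h : a₀ = a => ha (by simpa using h.symm)) (Finset.mem_univ a)
      rw [if_neg (fun h => ha (congrArg (fun x : S => x.1.1) h).symm), hPa]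
      ring
  rw [key]
  exact hpoly P Q hPdeg hQdeg
end
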